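/- arXiv:2509.20708 — 3 statements merged into one kernel-verified Lean document; each statement's English description precedes it below -/
import Mathlib

section
/- Let p ≥ 5 be a prime such that the Legendre symbol (−3/p) equals −1. Then for all integers n ≥ 0 and k ≥ 0 with p ∤ n, one has b(3·p^{2k+1}·n + (p^{2k+2} − 1)/2) ≡ 0 (mod 2). -/
open PowerSeries Finset

/-- The `n`-th summand `q^n (−q;q²)_n / (q;q²)_{n+1}` of the second order mock theta
function `B(q)`, as a formal power series over `ℤ`.  The denominator
`(q;q²)_{n+1} = ∏_{j=0}^{n} (1 - q^{2j+1})` has constant coefficient `1`, hence is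
invertible; we use `PowerSeries.invOfUnit`. -/
noncomputable def mockBterm (n : ℕ) : PowerSeries ℤ :=
  (X : PowerSeries ℤ) ^ n
    * (∏ j ∈ range n, (1 + (X : PowerSeries ℤ) ^ (2 * j + 1)))
    * PowerSeries.invOfUnit (∏ j ∈ range (n + 1), (1 - (X : PowerSeries ℤ) ^ (2 * j + 1))) 1

/-- `B(q) = Σ_{n≥0} q^n (−q;q²)_n/(q;q²)_{n+1}`.  The `n`-th summand is divisible by
`q^n`, so the `N`-th coefficient of `B(q)` only receives contributions from the
summands with `n ≤ N`; this defines the (formal) infinite sum coefficientwise. -/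
noncomputable def mockB : PowerSeries ℤ :=
  PowerSeries.mk fun N => ∑ n ∈ range (N + 1), PowerSeries.coeff N (mockBterm n)

/-- `b n` is the coefficient of `q^n` in `B(q)`. -/
noncomputable def b (n : ℕ) : ℤ := PowerSeries.coeff n mockB

/-! ### Auxiliary lemmas -/

/-- The formal geometric series `Σ_m X^{am} = (1 - X^a)⁻¹` over `ZMod 2`. -/
noncomputable def geomS (a : ℕ) : PowerSeries (ZMod 2) :=
  PowerSeries.mk fun m => if a ∣ m then 1 else 0

lemma one_sub_mul_geomS (a : ℕ) (ha : 0 < a) :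
    (1 - (X : PowerSeries (ZMod 2)) ^ a) * geomS a = 1 := by
  ext m
  rw [sub_mul, one_mul, map_sub, PowerSeries.coeff_one, coeff_X_pow_mul']
  simp only [geomS, PowerSeries.coeff_mk]
  rcases Nat.eq_zero_or_pos m with rfl | hm
  · rw [if_pos (Nat.dvd_zero a), if_neg (by omega : ¬ a ≤ 0), if_pos rfl]; ring
  · by_cases h : a ≤ m
    · have : a ∣ m ↔ a ∣ m - a := by
        constructor
        · intro hd; exact (Nat.dvd_sub hd dvd_rfl)
        · intro hd
          have := Nat.dvd_add hd (dvd_refl a)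
          rwa [Nat.sub_add_cancel h] at this
      simp only [this, if_pos h]
      simp [hm.ne']
    · have : ¬ a ∣ m := fun hd => h (Nat.le_of_dvd hm hd)
      simp [h, this, hm.ne']

lemma ps_neg_self (f : PowerSeries (ZMod 2)) : -f = f := by
  ext m; rw [map_neg]; exact CharTwo.neg_eq _

lemma ps_add_eq_sub (a : ℕ) :
    (1 : PowerSeries (ZMod 2)) + X ^ a = 1 - X ^ a := by
  rw [sub_eq_add_neg, ps_neg_self]

lemma map_mockBterm (n : ℕ) :
    PowerSeries.map (Int.castRingHom (ZMod 2)) (mockBterm n)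
      = X ^ n * geomS (2 * n + 1) := by
  set φ := Int.castRingHom (ZMod 2)
  set D : PowerSeries ℤ := ∏ j ∈ range (n + 1), (1 - (X : PowerSeries ℤ) ^ (2 * j + 1)) with hDdef
  have hD : constantCoeff D = 1 := by
    rw [hDdef, map_prod]
    simp
  have key : D * PowerSeries.invOfUnit D 1 = 1 :=
    PowerSeries.mul_invOfUnit D 1 (by rw [hD]; rfl)
  have key2 : PowerSeries.map φ (PowerSeries.invOfUnit D 1) * (PowerSeries.map φ D) = 1 := by
    rw [← map_mul, mul_comm, key, map_one]
  have hD2 : PowerSeries.map φ D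
      = ∏ j ∈ range (n + 1), (1 - (X : PowerSeries (ZMod 2)) ^ (2 * j + 1)) := by
    rw [hDdef, map_prod]
    simp
  have hD2ne : PowerSeries.map φ D ≠ 0 := by
    intro h
    have := congrArg (constantCoeff (R := ZMod 2)) h
    rw [← coeff_zero_eq_constantCoeff, PowerSeries.coeff_map, coeff_zero_eq_constantCoeff, hD] at this
    simp at this
  apply mul_right_cancel₀ hD2ne
  rw [mockBterm, map_mul, map_mul, map_pow, PowerSeries.map_X, ← hDdef]
  rw [mul_assoc, mul_assoc, key2, mul_one]
  have hmapP : PowerSeries.map φ (∏ j ∈ range n, (1 + (X : PowerSeries ℤ) ^ (2 * j + 1)))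
      = ∏ j ∈ range n, (1 - (X : PowerSeries (ZMod 2)) ^ (2 * j + 1)) := by
    rw [map_prod]
    refine Finset.prod_congr rfl fun j _ => ?_
    rw [map_add, map_one, map_pow, PowerSeries.map_X, ps_add_eq_sub]
  rw [hmapP, hD2, prod_range_succ]
  have hg : (1 - (X : PowerSeries (ZMod 2)) ^ (2 * n + 1)) * geomS (2 * n + 1) = 1 :=
    one_sub_mul_geomS _ (by omega)
  linear_combination (-(X ^ n * ∏ x ∈ range n, (1 - (X : PowerSeries (ZMod 2)) ^ (2 * x + 1)))) * hg

lemma divisors_card_even {M : ℕ} (hM : M ≠ 0) {p : ℕ}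
    (hodd : Odd (M.factorization p)) : 2 ∣ M.divisors.card := by
  rw [Nat.card_divisors hM]
  have hmem : p ∈ M.primeFactors := by
    rw [← Nat.support_factorization, Finsupp.mem_support_iff]
    rintro h
    rw [h] at hodd
    simp [Nat.odd_iff] at hodd
  have hdvd : (M.factorization p + 1) ∣ M.primeFactors.prod (M.factorization · + 1) :=
    Finset.dvd_prod_of_mem _ hmem
  obtain ⟨t, ht⟩ := hodd
  exact dvd_trans ⟨t + 1, by omega⟩ hdvd

lemma card_filter_eq_card_divisors (N : ℕ) :
    ((range (N + 1)).filter (fun n => (2 * n + 1) ∣ (2 * N + 1))).card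
      = (2 * N + 1).divisors.card := by
  apply Finset.card_bij (fun a _ => 2 * a + 1)
  · intro a ha
    simp only [mem_filter, mem_range] at ha
    rw [Nat.mem_divisors]
    exact ⟨ha.2, by omega⟩
  · intro a ha b hb h
    omega
  · intro d hd
    rw [Nat.mem_divisors] at hd
    have hodd : Odd d := by
      rcases Nat.even_or_odd d with he | ho
      · exfalso
        obtain ⟨c, hc⟩ := he
        have : 2 ∣ 2 * N + 1 := dvd_trans ⟨c, by omega⟩ hd.1
        omega
      · exact ho
    obtain ⟨m, hm⟩ := hodd
    refine ⟨m, ?_, by omega⟩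
    simp only [mem_filter, mem_range]
    have hle := Nat.le_of_dvd (by omega) hd.1
    exact ⟨by omega, by rw [← hm]; exact hd.1⟩

lemma b_cast (N : ℕ) :
    ((b N : ℤ) : ZMod 2) = (((2 * N + 1).divisors.card : ℕ) : ZMod 2) := by
  have h1 : ((b N : ℤ) : ZMod 2)
      = ∑ n ∈ range (N + 1),
          PowerSeries.coeff N
            (PowerSeries.map (Int.castRingHom (ZMod 2)) (mockBterm n)) := by
    rw [b, mockB, coeff_mk, Int.cast_sum]
    refine Finset.sum_congr rfl fun n _ => ?_
    rw [PowerSeries.coeff_map]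
    rfl
  have h2 : ∀ n ∈ range (N + 1),
      PowerSeries.coeff N
          (PowerSeries.map (Int.castRingHom (ZMod 2)) (mockBterm n))
        = if (2 * n + 1) ∣ (2 * N + 1) then (1 : ZMod 2) else 0 := by
    intro n hn
    rw [mem_range] at hn
    rw [map_mockBterm, coeff_X_pow_mul', if_pos (by omega : n ≤ N)]
    simp only [geomS, PowerSeries.coeff_mk]
    congr 1
    have hiff : (2 * n + 1) ∣ (N - n) ↔ (2 * n + 1) ∣ (2 * N + 1) := by
      constructor
      · intro hd
        have : (2 * n + 1) ∣ 2 * (N - n) + (2 * n + 1) :=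
          Nat.dvd_add (Dvd.dvd.mul_left hd 2) dvd_rfl
        have he : 2 * (N - n) + (2 * n + 1) = 2 * N + 1 := by omega
        rwa [he] at this
      · intro hd
        have h2d : (2 * n + 1) ∣ (2 * N + 1) - (2 * n + 1) := Nat.dvd_sub hd dvd_rfl
        have he : (2 * N + 1) - (2 * n + 1) = (N - n) * 2 := by omega
        rw [he] at h2d
        have hco : Nat.Coprime (2 * n + 1) 2 :=
          ((Nat.Prime.coprime_iff_not_dvd Nat.prime_two).mpr (by omega)).symm
        exact hco.dvd_of_dvd_mul_right h2d
    simp [hiff]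
  rw [h1, Finset.sum_congr rfl h2, Finset.sum_boole, card_filter_eq_card_divisors]

/-- Let `p ≥ 5` be a prime with `(−3/p) = −1`. Then for all `n, k ≥ 0` with `p ∤ n`,
`b(3·p^(2k+1)·n + (p^(2k+2) − 1)/2) ≡ 0 (mod 2)`. -/
theorem b_mod_two_family (p : ℕ) [Fact p.Prime] (hp : 5 ≤ p)
    (hleg : legendreSym p (-3) = -1) :
    ∀ n k : ℕ, ¬ p ∣ n →
      b (3 * p ^ (2 * k + 1) * n + (p ^ (2 * k + 2) - 1) / 2) ≡ 0 [ZMOD 2] := by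
  intro n k hpn
  have hp' : p.Prime := Fact.out
  set N : ℕ := 3 * p ^ (2 * k + 1) * n + (p ^ (2 * k + 2) - 1) / 2 with hN
  rw [Int.modEq_zero_iff_dvd]
  have hcast : ((b N : ℤ) : ZMod 2) = 0 → (2 : ℤ) ∣ b N := by
    intro h
    exact_mod_cast (ZMod.intCast_zmod_eq_zero_iff_dvd (b N) 2).mp h
  apply hcast
  rw [b_cast, ZMod.natCast_eq_zero_iff]
  -- arithmetic: 2N + 1 = p^(2k+1) * (6n + p)
  have hoddp : Odd p := hp'.odd_of_ne_two (by omega)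
  obtain ⟨t, ht⟩ : Odd (p ^ (2 * k + 2)) := hoddp.pow
  have e1 : p ^ (2 * k + 1) * (6 * n + p) = 6 * (p ^ (2 * k + 1) * n) + p ^ (2 * k + 2) := by
    ring
  have e2 : 3 * p ^ (2 * k + 1) * n = 3 * (p ^ (2 * k + 1) * n) := by ring
  have hM : 2 * N + 1 = p ^ (2 * k + 1) * (6 * n + p) := by
    rw [hN, e2, e1]
    omega
  have hMne : 2 * N + 1 ≠ 0 := by omega
  apply divisors_card_even hMne (p := p)
  have hnd : ¬ p ∣ (6 * n + p) := by
    intro h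
    have h6n : p ∣ 6 * n := by
      have := Nat.dvd_sub h (dvd_refl p)
      simpa using this
    rcases (Nat.Prime.dvd_mul hp').mp h6n with h6 | hn
    · rcases (Nat.Prime.dvd_mul hp').mp (show p ∣ 2 * 3 from h6) with h2 | h3
      · have := Nat.le_of_dvd (by norm_num) h2; omega
      · have := Nat.le_of_dvd (by norm_num) h3; omega
    · exact hpn hn
  have hfac : (2 * N + 1).factorization p = 2 * k + 1 := by
    rw [hM, Nat.factorization_mul (pow_ne_zero _ (by omega)) (by omega)]
    simp [Nat.Prime.factorization_pow hp', Nat.Prime.factorization hp', Finsupp.single_eq_same,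
      Nat.factorization_eq_zero_of_not_dvd hnd]
  rw [hfac]
  exact ⟨k, by omega⟩
end

section
/- Let p be an odd prime and let ℓ be an integer with 1 ≤ ℓ ≤ p − 1 such that the Legendre symbol ((4ℓ+1)/p) equals −1. Then for all integers n ≥ 0, b(2(pn + ℓ)) ≡ 0 (mod 4). -/
open PowerSeries Finset

abbrev R4 := ZMod 4

/-- geometric series 1/(1 - X^e) over ZMod 4 -/
noncomputable def geom (e : ℕ) : PowerSeries R4 :=
  PowerSeries.mk fun i => if e ∣ i then 1 else 0

lemma coeff_geom (e k : ℕ) : PowerSeries.coeff k (geom e) = if e ∣ k then 1 else 0 :=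
  PowerSeries.coeff_mk _ _

lemma one_sub_mul_geom (e : ℕ) (he : 0 < e) :
    ((1 : PowerSeries R4) - X ^ e) * geom e = 1 := by
  ext k
  rw [sub_mul, one_mul, map_sub, coeff_geom, PowerSeries.coeff_X_pow_mul', PowerSeries.coeff_one]
  rcases Nat.eq_zero_or_pos k with rfl | hk
  · simp [Nat.le_zero, he.ne']
  · by_cases hle : e ≤ k
    · rw [if_pos hle, coeff_geom]
      have hiff : e ∣ k ↔ e ∣ k - e := by
        constructor
        · intro h; exact (Nat.dvd_sub h dvd_rfl)
        · intro h
          have : k = (k - e) + e := by omega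
          rw [this]; exact Nat.dvd_add h dvd_rfl
      by_cases hd : e ∣ k
      · rw [if_pos hd, if_pos (hiff.mp hd), if_neg (by omega)]; ring
      · rw [if_neg hd, if_neg (fun h => hd (hiff.mpr h)), if_neg (by omega)]; ring
    · rw [if_neg hle, if_neg (fun h => hle (Nat.le_of_dvd hk h)),
        if_neg (by omega : ¬ k = 0)]
      ring

lemma two_mul_two_ps : (2 : PowerSeries R4) * 2 = 0 := by
  have : ((4 : ℕ) : PowerSeries R4) = PowerSeries.C ((4 : ℕ) : R4) :=
    (map_natCast (PowerSeries.C : R4 →+* PowerSeries R4) 4).symm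
  have h4 : ((4 : ℕ) : R4) = 0 := by decide
  norm_num
  rw [show (4 : PowerSeries R4) = ((4 : ℕ) : PowerSeries R4) by norm_cast, this, h4, map_zero]

lemma one_add_mul_geom (e : ℕ) (he : 0 < e) :
    ((1 : PowerSeries R4) + X ^ e) * geom e = 1 + 2 * (X ^ e * geom e) := by
  have : (1 : PowerSeries R4) + X ^ e = (1 - X ^ e) + 2 * X ^ e := by ring
  rw [this, add_mul, one_sub_mul_geom e he, mul_assoc]

/-- key inductive product identity over ZMod 4 -/
lemma main_prod (n : ℕ) :
    (∏ j ∈ range n, ((1 : PowerSeries R4) + X ^ (2 * j + 1)))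
      * ∏ j ∈ range (n + 1), geom (2 * j + 1)
    = geom (2 * n + 1)
      * (1 + 2 * ∑ j ∈ range n, X ^ (2 * j + 1) * geom (2 * j + 1)) := by
  induction n with
  | zero => simp
  | succ n ih =>
    rw [prod_range_succ, prod_range_succ (f := fun j => geom (2 * j + 1)),
      sum_range_succ]
    have h1 : (∏ j ∈ range n, ((1 : PowerSeries R4) + X ^ (2 * j + 1)))
        * ((1 : PowerSeries R4) + X ^ (2 * n + 1))
        * ((∏ j ∈ range (n + 1), geom (2 * j + 1)) * geom (2 * (n + 1) + 1))
        = ((∏ j ∈ range n, ((1 : PowerSeries R4) + X ^ (2 * j + 1)))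
            * ∏ j ∈ range (n + 1), geom (2 * j + 1))
          * (((1 : PowerSeries R4) + X ^ (2 * n + 1)))
          * geom (2 * (n + 1) + 1) := by ring
    rw [h1, ih]
    have h2 : geom (2 * n + 1)
        * (1 + 2 * ∑ j ∈ range n, X ^ (2 * j + 1) * geom (2 * j + 1))
        * ((1 : PowerSeries R4) + X ^ (2 * n + 1)) * geom (2 * (n + 1) + 1)
        = (((1 : PowerSeries R4) + X ^ (2 * n + 1)) * geom (2 * n + 1))
          * (1 + 2 * ∑ j ∈ range n, X ^ (2 * j + 1) * geom (2 * j + 1))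
          * geom (2 * (n + 1) + 1) := by ring
    rw [h2, one_add_mul_geom _ (by omega)]
    have h3 : ((1 : PowerSeries R4) + 2 * (X ^ (2 * n + 1) * geom (2 * n + 1)))
        * (1 + 2 * ∑ j ∈ range n, X ^ (2 * j + 1) * geom (2 * j + 1))
        = 1 + 2 * ((∑ j ∈ range n, X ^ (2 * j + 1) * geom (2 * j + 1))
            + X ^ (2 * n + 1) * geom (2 * n + 1))
          + (2 * 2) * ((X ^ (2 * n + 1) * geom (2 * n + 1))
            * ∑ j ∈ range n, X ^ (2 * j + 1) * geom (2 * j + 1)) := by ring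
    rw [h3, two_mul_two_ps]
    ring

noncomputable def phi : PowerSeries ℤ →+* PowerSeries R4 :=
  PowerSeries.map (Int.castRingHom R4)

lemma prod_one_sub_mul_prod_geom (n : ℕ) :
    (∏ j ∈ range n, ((1 : PowerSeries R4) - X ^ (2 * j + 1)))
      * ∏ j ∈ range n, geom (2 * j + 1) = 1 := by
  rw [← prod_mul_distrib]
  exact prod_eq_one fun j _ => one_sub_mul_geom _ (by omega)

lemma constCoeff_Q (n : ℕ) :
    constantCoeff (∏ j ∈ range (n + 1), (1 - (X : PowerSeries ℤ) ^ (2 * j + 1))) = 1 := by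
  rw [map_prod]
  refine prod_eq_one fun j _ => ?_
  rw [map_sub, map_one, map_pow, constantCoeff_X, zero_pow (by omega)]
  ring

lemma map_mockBterm_s5 (n : ℕ) :
    phi (mockBterm n)
      = X ^ n * (geom (2 * n + 1)
          * (1 + 2 * ∑ j ∈ range n, X ^ (2 * j + 1) * geom (2 * j + 1))) := by
  have hQ : (∏ j ∈ range (n + 1), (1 - (X : PowerSeries ℤ) ^ (2 * j + 1)))
      * PowerSeries.invOfUnit (∏ j ∈ range (n + 1), (1 - (X : PowerSeries ℤ) ^ (2 * j + 1))) 1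
      = 1 := PowerSeries.mul_invOfUnit _ 1 (by rw [constCoeff_Q]; rfl)
  -- map of Q
  have hmapQ : phi (∏ j ∈ range (n + 1), (1 - (X : PowerSeries ℤ) ^ (2 * j + 1)))
      = ∏ j ∈ range (n + 1), ((1 : PowerSeries R4) - X ^ (2 * j + 1)) := by
    rw [map_prod]
    refine prod_congr rfl fun j _ => ?_
    rw [map_sub, map_one, map_pow]
    simp [phi, PowerSeries.map_X]
  have hinv : phi (PowerSeries.invOfUnit
        (∏ j ∈ range (n + 1), (1 - (X : PowerSeries ℤ) ^ (2 * j + 1))) 1)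
      = ∏ j ∈ range (n + 1), geom (2 * j + 1) := by
    have h1 : (∏ j ∈ range (n + 1), ((1 : PowerSeries R4) - X ^ (2 * j + 1)))
        * phi (PowerSeries.invOfUnit
          (∏ j ∈ range (n + 1), (1 - (X : PowerSeries ℤ) ^ (2 * j + 1))) 1) = 1 := by
      rw [← hmapQ, ← map_mul, hQ, map_one]
    calc phi (PowerSeries.invOfUnit _ 1)
        = ((∏ j ∈ range (n + 1), geom (2 * j + 1))
            * ∏ j ∈ range (n + 1), ((1 : PowerSeries R4) - X ^ (2 * j + 1)))
          * phi (PowerSeries.invOfUnit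
            (∏ j ∈ range (n + 1), (1 - (X : PowerSeries ℤ) ^ (2 * j + 1))) 1) := by
          rw [mul_comm (∏ j ∈ range (n + 1), geom (2 * j + 1)),
            prod_one_sub_mul_prod_geom, one_mul]
      _ = (∏ j ∈ range (n + 1), geom (2 * j + 1)) * 1 := by rw [mul_assoc, h1]
      _ = _ := mul_one _
  have hmapP : phi (∏ j ∈ range n, (1 + (X : PowerSeries ℤ) ^ (2 * j + 1)))
      = ∏ j ∈ range n, ((1 : PowerSeries R4) + X ^ (2 * j + 1)) := by
    rw [map_prod]
    refine prod_congr rfl fun j _ => ?_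
    rw [map_add, map_one, map_pow]
    simp [phi, PowerSeries.map_X]
  rw [mockBterm, map_mul, map_mul, hinv, hmapP, map_pow,
    show phi X = (X : PowerSeries R4) from PowerSeries.map_X _,
    mul_assoc, main_prod n]

/-- number of divisors of 2N+1, in filtered form -/
def Ddiv (N : ℕ) : ℕ := ((range (N + 1)).filter fun n => (2 * n + 1) ∣ (2 * N + 1)).card

def cnj (N n j : ℕ) : ℕ :=
  if n + (2 * j + 1) ≤ N then
    ((antidiagonal (N - (n + (2 * j + 1)))).filter
      fun p => (2 * j + 1) ∣ p.1 ∧ (2 * n + 1) ∣ p.2).card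
  else 0

def Tcard (N : ℕ) : ℕ := ∑ n ∈ range (N + 1), ∑ j ∈ range n, cnj N n j

lemma dvd_iff_main (N n : ℕ) (h : n ≤ N) :
    (2 * n + 1) ∣ (N - n) ↔ (2 * n + 1) ∣ (2 * N + 1) := by
  constructor
  · rintro ⟨k, hk⟩
    refine ⟨2 * k + 1, ?_⟩
    have hr : (2 * n + 1) * (2 * k + 1) = 2 * ((2 * n + 1) * k) + (2 * n + 1) := by ring
    omega
  · rintro ⟨k, hk⟩
    have hodd : k % 2 = 1 := by
      rcases Nat.even_or_odd k with he | ho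
      · obtain ⟨u, hu⟩ := he
        subst hu
        have hr : (2 * n + 1) * (u + u) = 2 * ((2 * n + 1) * u) := by ring
        omega
      · exact Nat.odd_iff.mp ho
    obtain ⟨t, ht⟩ : ∃ t, k = 2 * t + 1 := ⟨k / 2, by omega⟩
    refine ⟨t, ?_⟩
    have hr : (2 * n + 1) * (2 * t + 1) = 2 * ((2 * n + 1) * t) + (2 * n + 1) := by ring
    subst ht
    omega

lemma coeff_main (N n : ℕ) (hn : n ∈ range (N + 1)) :
    PowerSeries.coeff N (X ^ n * geom (2 * n + 1))
      = if (2 * n + 1) ∣ (2 * N + 1) then 1 else 0 := by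
  rw [PowerSeries.coeff_X_pow_mul', if_pos (by simpa using Nat.lt_succ_iff.mp (mem_range.mp hn)),
    coeff_geom]
  rw [if_congr (dvd_iff_main N n (Nat.lt_succ_iff.mp (mem_range.mp hn))) rfl rfl]

lemma coeff_two_part (N n j : ℕ) :
    PowerSeries.coeff N (X ^ (n + (2 * j + 1)) * (geom (2 * j + 1) * geom (2 * n + 1)))
      = ((cnj N n j : ℕ) : R4) := by
  rw [PowerSeries.coeff_X_pow_mul', cnj]
  by_cases h : n + (2 * j + 1) ≤ N
  · rw [if_pos h, if_pos h, PowerSeries.coeff_mul]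
    rw [show ((((antidiagonal (N - (n + (2 * j + 1)))).filter
        fun p => (2 * j + 1) ∣ p.1 ∧ (2 * n + 1) ∣ p.2).card : ℕ) : R4)
      = ∑ p ∈ antidiagonal (N - (n + (2 * j + 1))),
          (if (2 * j + 1) ∣ p.1 ∧ (2 * n + 1) ∣ p.2 then (1 : R4) else 0) from
      (Finset.sum_boole _ _).symm]
    refine Finset.sum_congr rfl fun p _ => ?_
    rw [coeff_geom, coeff_geom]
    by_cases h1 : (2 * j + 1) ∣ p.1 <;> by_cases h2 : (2 * n + 1) ∣ p.2 <;>
      simp [h1, h2]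
  · rw [if_neg h, if_neg h]
    simp

lemma bN_mod4 (N : ℕ) :
    ((b N : ℤ) : R4) = ((Ddiv N : ℕ) : R4) + 2 * ((Tcard N : ℕ) : R4) := by
  have h1 : ((b N : ℤ) : R4)
      = ∑ n ∈ range (N + 1), PowerSeries.coeff N (phi (mockBterm n)) := by
    rw [b, mockB, PowerSeries.coeff_mk]
    push_cast
    refine Finset.sum_congr rfl fun n _ => ?_
    rw [phi, PowerSeries.coeff_map]
    rfl
  rw [h1]
  have h2 : ∀ n ∈ range (N + 1),
      PowerSeries.coeff N (phi (mockBterm n))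
        = (if (2 * n + 1) ∣ (2 * N + 1) then (1 : R4) else 0)
          + 2 * ∑ j ∈ range n, ((cnj N n j : ℕ) : R4) := by
    intro n hn
    rw [map_mockBterm_s5]
    have hmid : (X : PowerSeries R4) ^ n * geom (2 * n + 1)
          * (2 * ∑ j ∈ range n, X ^ (2 * j + 1) * geom (2 * j + 1))
        = 2 * ∑ j ∈ range n,
            X ^ (n + (2 * j + 1)) * (geom (2 * j + 1) * geom (2 * n + 1)) := by
      rw [Finset.mul_sum, Finset.mul_sum, Finset.mul_sum]
      exact Finset.sum_congr rfl fun j _ => by rw [pow_add]; ring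
    have hexp : (X : PowerSeries R4) ^ n * (geom (2 * n + 1)
          * (1 + 2 * ∑ j ∈ range n, X ^ (2 * j + 1) * geom (2 * j + 1)))
        = X ^ n * geom (2 * n + 1)
          + 2 * ∑ j ∈ range n,
              X ^ (n + (2 * j + 1)) * (geom (2 * j + 1) * geom (2 * n + 1)) := by
      rw [← hmid]
      ring
    rw [hexp, map_add, coeff_main N n hn]
    congr 1
    have h2f : ∀ (f : PowerSeries R4),
        PowerSeries.coeff N (2 * f) = 2 * PowerSeries.coeff N f := by
      intro f
      rw [show (2 : PowerSeries R4) * f = f + f by ring, map_add, two_mul]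
    rw [h2f, map_sum]
    congr 1
    exact Finset.sum_congr rfl fun j _ => coeff_two_part N n j
  rw [Finset.sum_congr rfl h2, Finset.sum_add_distrib, Finset.sum_boole, ← Finset.mul_sum]
  rw [Ddiv, Tcard]
  push_cast
  ring

/-- parity via involution -/
lemma invol_parity {α : Type*} [DecidableEq α] (s : Finset α) (g : α → α)
    (hmem : ∀ a ∈ s, g a ∈ s) (hgg : ∀ a ∈ s, g (g a) = a) :
    ((s.card : ZMod 2)) = (((s.filter fun a => g a = a).card : ZMod 2)) := by
  classical
  have hsplit : (s.filter fun a => g a = a).card + (s.filter fun a => ¬ g a = a).card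
      = s.card := Finset.card_filter_add_card_filter_not _
  have hzero : (((s.filter fun a => ¬ g a = a).card : ZMod 2)) = 0 := by
    rw [Finset.card_eq_sum_ones, Nat.cast_sum]
    refine Finset.sum_involution (fun a _ => g a) ?_ ?_ ?_ ?_
    · intro a ha; decide
    · intro a ha h1
      exact (Finset.mem_filter.mp ha).2
    · intro a ha
      rw [Finset.mem_filter] at ha ⊢
      refine ⟨hmem a ha.1, fun h => ha.2 ?_⟩
      have := hgg a ha.1
      rw [h] at this
      rw [← this, h]
    · intro a ha
      exact hgg a (Finset.mem_filter.mp ha).1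
  have : ((s.card : ZMod 2)) = (((s.filter fun a => g a = a).card : ZMod 2))
      + (((s.filter fun a => ¬ g a = a).card : ZMod 2)) := by
    rw [← Nat.cast_add, hsplit]
  rw [this, hzero, add_zero]

/-- for nonsquare m, the divisor count is twice the number of small divisors -/
lemma divisors_card_eq_two_mul (m : ℕ) (hm : 0 < m) (hns : ∀ k : ℕ, m ≠ k * k) :
    m.divisors.card = 2 * (m.divisors.filter fun d => d * d < m).card := by
  have hsplit : (m.divisors.filter fun d => d * d < m).card
      + (m.divisors.filter fun d => ¬ d * d < m).card = m.divisors.card :=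
    Finset.card_filter_add_card_filter_not _
  have hbij : (m.divisors.filter fun d => ¬ d * d < m).card
      = (m.divisors.filter fun d => d * d < m).card := by
    refine Finset.card_bij (fun d _ => m / d) ?_ ?_ ?_
    · intro d hd
      rw [Finset.mem_filter, Nat.mem_divisors] at hd
      obtain ⟨⟨hdvd, _⟩, hbig⟩ := hd
      have hd0 : 0 < d := Nat.pos_of_dvd_of_pos hdvd hm
      have hde : m / d * d = m := Nat.div_mul_cancel hdvd
      have hne : d * d ≠ m := fun h => hns d h.symm
      have hgt : m < d * d := by omega
      have he0 : 0 < m / d := Nat.div_pos (Nat.le_of_dvd hm hdvd) hd0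
      have hlt : m / d < d := by
        by_contra hc
        push_neg at hc
        have : d * d ≤ m / d * d := Nat.mul_le_mul_right d hc
        omega
      rw [Finset.mem_filter, Nat.mem_divisors]
      refine ⟨⟨Nat.div_dvd_of_dvd hdvd, hm.ne'⟩, ?_⟩
      calc m / d * (m / d) < m / d * d := by
            exact mul_lt_mul_of_pos_left hlt he0
        _ = m := hde
    · intro d1 hd1 d2 hd2 heq
      rw [Finset.mem_filter, Nat.mem_divisors] at hd1 hd2
      have heq' : m / d1 = m / d2 := heq
      rw [← Nat.div_div_self hd1.1.1 hm.ne', heq', Nat.div_div_self hd2.1.1 hm.ne']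
    · intro e he
      rw [Finset.mem_filter, Nat.mem_divisors] at he
      obtain ⟨⟨hdvd, _⟩, hsmall⟩ := he
      have he0 : 0 < e := Nat.pos_of_dvd_of_pos hdvd hm
      have hde : m / e * e = m := Nat.div_mul_cancel hdvd
      have hlt : e < m / e := by
        by_contra hc
        push_neg at hc
        have : m / e * e ≤ e * e := Nat.mul_le_mul_right e hc
        omega
      refine ⟨m / e, ?_, Nat.div_div_self hdvd hm.ne'⟩
      rw [Finset.mem_filter, Nat.mem_divisors]
      refine ⟨⟨Nat.div_dvd_of_dvd hdvd, hm.ne'⟩, ?_⟩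
      intro hc
      have he1 : 0 < m / e := Nat.div_pos (Nat.le_of_dvd hm hdvd) he0
      have : m / e * e < m / e * (m / e) := by
        exact mul_lt_mul_of_pos_left hlt he1
      omega
  omega

def Uset (N : ℕ) : Finset ((ℕ × ℕ) × ℕ × ℕ) :=
  ((range (N + 1) ×ˢ range (N + 1)) ×ˢ (range (N + 1) ×ˢ range (N + 1))).filter
    fun x => x.1.2 < x.1.1
      ∧ N = x.1.1 + (2 * x.1.2 + 1) * (x.2.1 + 1) + (2 * x.1.1 + 1) * x.2.2

lemma Ddiv_eq (N : ℕ) : Ddiv N = (2 * N + 1).divisors.card := by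
  refine Finset.card_bij (fun n _ => 2 * n + 1) ?_ ?_ ?_
  · intro n hn
    rw [Finset.mem_filter] at hn
    rw [Nat.mem_divisors]
    exact ⟨hn.2, by omega⟩
  · intro n1 h1 n2 h2 heq
    have : 2 * n1 + 1 = 2 * n2 + 1 := heq
    omega
  · intro d hd
    rw [Nat.mem_divisors] at hd
    have hodd : d % 2 = 1 := by
      rcases Nat.even_or_odd d with he | ho
      · exfalso
        obtain ⟨u, hu⟩ := he
        obtain ⟨k, hk⟩ := hd.1
        subst hu
        have : (u + u) * k = 2 * (u * k) := by ring
        omega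
      · exact Nat.odd_iff.mp ho
    have hle : d ≤ 2 * N + 1 := Nat.le_of_dvd (by omega) hd.1
    refine ⟨d / 2, ?_, show 2 * (d / 2) + 1 = d by omega⟩
    rw [Finset.mem_filter, Finset.mem_range]
    refine ⟨by omega, ?_⟩
    have : 2 * (d / 2) + 1 = d := by omega
    rw [this]; exact hd.1

lemma inner_count (N n j : ℕ) (hj : j < n) :
    ∑ u ∈ range (N + 1), ∑ v ∈ range (N + 1),
      (if j < n ∧ N = n + (2 * j + 1) * (u + 1) + (2 * n + 1) * v then 1 else 0)
    = cnj N n j := by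
  have hsum : ∑ u ∈ range (N + 1), ∑ v ∈ range (N + 1),
        (if j < n ∧ N = n + (2 * j + 1) * (u + 1) + (2 * n + 1) * v then 1 else 0)
      = (((range (N + 1)) ×ˢ (range (N + 1))).filter
          fun q : ℕ × ℕ => j < n ∧ N = n + (2 * j + 1) * (q.1 + 1) + (2 * n + 1) * q.2).card := by
    rw [Finset.card_filter, Finset.sum_product]
  rw [hsum, cnj]
  by_cases hle : n + (2 * j + 1) ≤ N
  · rw [if_pos hle]
    refine Finset.card_bij (fun q _ => ((2 * j + 1) * q.1, (2 * n + 1) * q.2)) ?_ ?_ ?_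
    · intro q hq
      rw [Finset.mem_filter] at hq
      obtain ⟨-, -, heq⟩ := hq
      rw [Finset.mem_filter, Finset.HasAntidiagonal.mem_antidiagonal]
      have hr : (2 * j + 1) * (q.1 + 1) = (2 * j + 1) * q.1 + (2 * j + 1) := by ring
      refine ⟨?_, ⟨q.1, rfl⟩, ⟨q.2, rfl⟩⟩
      show (2 * j + 1) * q.1 + (2 * n + 1) * q.2 = N - (n + (2 * j + 1))
      omega
    · intro q1 h1 q2 h2 heq
      have heq' : ((2 * j + 1) * q1.1, (2 * n + 1) * q1.2)
          = ((2 * j + 1) * q2.1, (2 * n + 1) * q2.2) := heq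
      have e1 : (2 * j + 1) * q1.1 = (2 * j + 1) * q2.1 := congrArg Prod.fst heq'
      have e2 : (2 * n + 1) * q1.2 = (2 * n + 1) * q2.2 := congrArg Prod.snd heq'
      have : q1.1 = q2.1 := Nat.eq_of_mul_eq_mul_left (by omega) e1
      have : q1.2 = q2.2 := Nat.eq_of_mul_eq_mul_left (by omega) e2
      exact Prod.ext ‹q1.1 = q2.1› ‹q1.2 = q2.2›
    · intro p hp
      rw [Finset.mem_filter, Finset.HasAntidiagonal.mem_antidiagonal] at hp
      obtain ⟨hdiag, ⟨u, hu⟩, ⟨v, hv⟩⟩ := hp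
      refine ⟨(u, v), ?_, show ((2 * j + 1) * u, (2 * n + 1) * v) = p from
        Prod.ext hu.symm hv.symm⟩
      rw [Finset.mem_filter, Finset.mem_product, Finset.mem_range, Finset.mem_range]
      have hu1 : u ≤ (2 * j + 1) * u := Nat.le_mul_of_pos_left u (by omega)
      have hv1 : v ≤ (2 * n + 1) * v := Nat.le_mul_of_pos_left v (by omega)
      have hr : (2 * j + 1) * (u + 1) = (2 * j + 1) * u + (2 * j + 1) := by ring
      show (u < N + 1 ∧ v < N + 1)
        ∧ j < n ∧ N = n + (2 * j + 1) * (u + 1) + (2 * n + 1) * v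
      refine ⟨⟨by omega, by omega⟩, hj, by omega⟩
  · rw [if_neg hle]
    refine Finset.card_eq_zero.mpr ?_
    rw [Finset.filter_eq_empty_iff]
    intro q hq
    rintro ⟨-, heq⟩
    have h1 : 2 * j + 1 ≤ (2 * j + 1) * (q.1 + 1) := Nat.le_mul_of_pos_right _ (by omega)
    omega

lemma Tcard_eq_Uset (N : ℕ) : Tcard N = (Uset N).card := by
  rw [Uset, Finset.card_filter, Finset.sum_product]
  have hthis : ∀ y ∈ range (N + 1) ×ˢ range (N + 1),
      (∑ z ∈ range (N + 1) ×ˢ range (N + 1),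
        if ((y, z) : (ℕ × ℕ) × ℕ × ℕ).1.2 < (y, z).1.1
            ∧ N = (y, z).1.1 + (2 * (y, z).1.2 + 1) * ((y, z).2.1 + 1)
              + (2 * (y, z).1.1 + 1) * (y, z).2.2 then 1 else 0)
      = ∑ u ∈ range (N + 1), ∑ v ∈ range (N + 1),
          (if y.2 < y.1 ∧ N = y.1 + (2 * y.2 + 1) * (u + 1) + (2 * y.1 + 1) * v
            then 1 else 0) := by
    intro y _
    exact Finset.sum_product _ _ _
  rw [Finset.sum_congr rfl hthis, Finset.sum_product, Tcard]
  refine Finset.sum_congr rfl fun n hn => ?_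
  have hnN : n ≤ N := by rw [Finset.mem_range] at hn; omega
  have hsub : range n ⊆ range (N + 1) := fun x hx => by
    rw [Finset.mem_range] at hx ⊢; omega
  have hzero : ∀ j ∈ range (N + 1), j ∉ range n →
      (∑ u ∈ range (N + 1), ∑ v ∈ range (N + 1),
        if j < n ∧ N = n + (2 * j + 1) * (u + 1) + (2 * n + 1) * v then 1 else 0) = 0 := by
    intro j _ hj
    rw [Finset.mem_range, Nat.not_lt] at hj
    refine Finset.sum_eq_zero fun u _ => Finset.sum_eq_zero fun v _ => ?_
    rw [if_neg]
    rintro ⟨hlt, -⟩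
    omega
  calc ∑ j ∈ range n, cnj N n j
      = ∑ j ∈ range n, ∑ u ∈ range (N + 1), ∑ v ∈ range (N + 1),
          (if j < n ∧ N = n + (2 * j + 1) * (u + 1) + (2 * n + 1) * v then 1 else 0) :=
        Finset.sum_congr rfl fun j hj => (inner_count N n j (Finset.mem_range.mp hj)).symm
    _ = ∑ j ∈ range (N + 1), ∑ u ∈ range (N + 1), ∑ v ∈ range (N + 1),
          (if j < n ∧ N = n + (2 * j + 1) * (u + 1) + (2 * n + 1) * v then 1 else 0) :=
        Finset.sum_subset hsub hzero

def invU : (ℕ × ℕ) × ℕ × ℕ → (ℕ × ℕ) × ℕ × ℕ :=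
  fun x => ((x.2.2 + x.2.1 + 1, x.2.2), (x.1.1 - x.1.2 - 1, x.1.2))

lemma mem_Uset_iff (N : ℕ) (n j u v : ℕ) :
    ((n, j), (u, v)) ∈ Uset N ↔
      (n ≤ N ∧ j ≤ N ∧ u ≤ N ∧ v ≤ N) ∧ j < n
        ∧ N = n + (2 * j + 1) * (u + 1) + (2 * n + 1) * v := by
  rw [Uset, Finset.mem_filter, Finset.mem_product, Finset.mem_product, Finset.mem_product]
  simp only [Finset.mem_range]
  constructor
  · rintro ⟨⟨⟨h1, h2⟩, h3, h4⟩, h5, h6⟩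
    exact ⟨⟨by omega, by omega, by omega, by omega⟩, h5, h6⟩
  · rintro ⟨⟨h1, h2, h3, h4⟩, h5, h6⟩
    exact ⟨⟨⟨by omega, by omega⟩, by omega, by omega⟩, h5, h6⟩

lemma invU_mem {N : ℕ} {x : (ℕ × ℕ) × ℕ × ℕ} (hx : x ∈ Uset N) : invU x ∈ Uset N := by
  obtain ⟨⟨n, j⟩, u, v⟩ := x
  rw [mem_Uset_iff] at hx
  obtain ⟨⟨hn, hj, hu, hv⟩, hlt, heq⟩ := hx
  show ((v + u + 1, v), (n - j - 1, j)) ∈ Uset N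
  rw [mem_Uset_iff]
  obtain ⟨k, hk⟩ : ∃ k, n = j + k + 1 := ⟨n - j - 1, by omega⟩
  have hk' : n - j - 1 = k := by omega
  subst hk
  rw [hk']
  have hident : (j + k + 1) + (2 * j + 1) * (u + 1) + (2 * (j + k + 1) + 1) * v
      = (v + u + 1) + (2 * v + 1) * (k + 1) + (2 * (v + u + 1) + 1) * j := by ring
  have haux1 : u + 1 ≤ (2 * j + 1) * (u + 1) := Nat.le_mul_of_pos_left _ (by omega)
  have haux2 : v ≤ (2 * (j + k + 1) + 1) * v := Nat.le_mul_of_pos_left _ (by omega)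
  refine ⟨⟨by omega, by omega, by omega, by omega⟩, by omega, by omega⟩

lemma invU_invol {N : ℕ} {x : (ℕ × ℕ) × ℕ × ℕ} (hx : x ∈ Uset N) : invU (invU x) = x := by
  obtain ⟨⟨n, j⟩, u, v⟩ := x
  rw [mem_Uset_iff] at hx
  obtain ⟨-, hlt, -⟩ := hx
  show ((j + (n - j - 1) + 1, j), (v + u + 1 - v - 1, v)) = ((n, j), (u, v))
  have e1 : j + (n - j - 1) + 1 = n := by omega
  have e2 : v + u + 1 - v - 1 = u := by omega
  rw [e1, e2]

lemma fix_card (N : ℕ) (hm4 : (2 * N + 1) % 4 = 1) :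
    ((Uset N).filter fun x => invU x = x).card
      = ((2 * N + 1).divisors.filter fun d => d * d < 2 * N + 1).card := by
  refine Finset.card_bij (fun x _ => 2 * x.1.2 + 1) ?_ ?_ ?_
  · rintro ⟨⟨n, j⟩, u, v⟩ hx
    rw [Finset.mem_filter] at hx
    obtain ⟨hmem, hfix⟩ := hx
    rw [mem_Uset_iff] at hmem
    obtain ⟨-, hlt, heq⟩ := hmem
    have hfix' : ((v + u + 1, v), (n - j - 1, j)) = ((n, j), (u, v)) := hfix
    have h1 : v + u + 1 = n := congrArg (Prod.fst ∘ Prod.fst) hfix'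
    have h2 : v = j := congrArg (Prod.snd ∘ Prod.fst) hfix'
    subst h2
    subst h1
    -- heq : N = (v+u+1) + (2v+1)(u+1) + (2(v+u+1)+1)v
    have expand : (2 * v + 1) * (2 * v + 4 * u + 5)
        = 2 * ((v + u + 1) + (2 * v + 1) * (u + 1) + (2 * (v + u + 1) + 1) * v) + 1 := by
      ring
    have key : 2 * N + 1 = (2 * v + 1) * (2 * v + 4 * u + 5) := by omega
    show 2 * v + 1 ∈ (2 * N + 1).divisors.filter fun d => d * d < 2 * N + 1
    rw [Finset.mem_filter, Nat.mem_divisors]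
    have hlt2 : (2 * v + 1) * (2 * v + 1) < (2 * v + 1) * (2 * v + 4 * u + 5) :=
      mul_lt_mul_of_pos_left (by omega) (by omega)
    exact ⟨⟨⟨2 * v + 4 * u + 5, key⟩, by omega⟩, by omega⟩
  · rintro ⟨⟨n1, j1⟩, u1, v1⟩ hx1 ⟨⟨n2, j2⟩, u2, v2⟩ hx2 heq
    have hj : j1 = j2 := by
      have : 2 * j1 + 1 = 2 * j2 + 1 := heq
      omega
    rw [Finset.mem_filter] at hx1 hx2
    obtain ⟨hmem1, hfix1⟩ := hx1
    obtain ⟨hmem2, hfix2⟩ := hx2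
    rw [mem_Uset_iff] at hmem1 hmem2
    obtain ⟨-, hlt1, heq1⟩ := hmem1
    obtain ⟨-, hlt2, heq2⟩ := hmem2
    have hf1 : ((v1 + u1 + 1, v1), (n1 - j1 - 1, j1)) = ((n1, j1), (u1, v1)) := hfix1
    have hf2 : ((v2 + u2 + 1, v2), (n2 - j2 - 1, j2)) = ((n2, j2), (u2, v2)) := hfix2
    have a1 : v1 + u1 + 1 = n1 := by
      have := congrArg (fun y : (ℕ × ℕ) × ℕ × ℕ => y.1.1) hf1
      simpa using this
    have a2 : v1 = j1 := by
      have := congrArg (fun y : (ℕ × ℕ) × ℕ × ℕ => y.1.2) hf1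
      simpa using this
    have b1 : v2 + u2 + 1 = n2 := by
      have := congrArg (fun y : (ℕ × ℕ) × ℕ × ℕ => y.1.1) hf2
      simpa using this
    have b2 : v2 = j2 := by
      have := congrArg (fun y : (ℕ × ℕ) × ℕ × ℕ => y.1.2) hf2
      simpa using this
    rw [← a1] at heq1
    rw [a2] at heq1
    rw [← b1] at heq2
    rw [b2] at heq2
    have e1 : (2 * j1 + 1) * (2 * j1 + 4 * u1 + 5)
        = 2 * ((j1 + u1 + 1) + (2 * j1 + 1) * (u1 + 1) + (2 * (j1 + u1 + 1) + 1) * j1) + 1 := by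
      ring
    have e2 : (2 * j2 + 1) * (2 * j2 + 4 * u2 + 5)
        = 2 * ((j2 + u2 + 1) + (2 * j2 + 1) * (u2 + 1) + (2 * (j2 + u2 + 1) + 1) * j2) + 1 := by
      ring
    subst hj
    have key : (2 * j1 + 1) * (2 * j1 + 4 * u1 + 5) = (2 * j1 + 1) * (2 * j1 + 4 * u2 + 5) := by
      omega
    have hu512 : 2 * j1 + 4 * u1 + 5 = 2 * j1 + 4 * u2 + 5 :=
      Nat.eq_of_mul_eq_mul_left (by omega) key
    simp only [Prod.mk.injEq]
    refine ⟨⟨by omega, trivial⟩, by omega, by omega⟩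
  · intro d hd
    rw [Finset.mem_filter, Nat.mem_divisors] at hd
    obtain ⟨⟨hdvd, -⟩, hsmall⟩ := hd
    set m := 2 * N + 1 with hmdef
    have hdodd : d % 2 = 1 := by
      rcases Nat.even_or_odd d with he | ho
      · exfalso
        obtain ⟨w, hw⟩ := he
        obtain ⟨k, hk⟩ := hdvd
        subst hw
        have : (w + w) * k = 2 * (w * k) := by ring
        omega
      · exact Nat.odd_iff.mp ho
    have hd0 : 0 < d := by omega
    obtain ⟨e, he⟩ := hdvd
    have he0 : 0 < e := by
      rcases Nat.eq_zero_or_pos e with rfl | h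
      · omega
      · exact h
    have heodd : e % 2 = 1 := by
      rcases Nat.even_or_odd e with hee | ho
      · exfalso
        obtain ⟨w, hw⟩ := hee
        subst hw
        have : d * (w + w) = 2 * (d * w) := by ring
        omega
      · exact Nat.odd_iff.mp ho
    have hdlt : d < e := by
      by_contra hc
      push_neg at hc
      have : d * e ≤ d * d := Nat.mul_le_mul_left d hc
      omega
    -- mod 4 analysis
    have hd4 : d % 4 = 1 ∨ d % 4 = 3 := by omega
    have he4 : e % 4 = 1 ∨ e % 4 = 3 := by omega
    have hmod : d % 4 = e % 4 := by
      have hmm : d * e % 4 = 1 := by omega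
      rw [Nat.mul_mod] at hmm
      rcases hd4 with h1 | h1 <;> rcases he4 with h2 | h2 <;> rw [h1, h2] at hmm <;> omega
    have hege : d + 4 ≤ e := by omega
    set j := d / 2 with hjdef
    have hdj : d = 2 * j + 1 := by omega
    set u := (e - d - 4) / 4 with hudef
    have heu : e = 2 * j + 4 * u + 5 := by omega
    refine ⟨((j + u + 1, j), (u, j)), ?_, show 2 * j + 1 = d by omega⟩
    rw [Finset.mem_filter]
    constructor
    · rw [mem_Uset_iff]
      have hkey : m = (2 * j + 1) * (2 * j + 4 * u + 5) := by
        rw [he, hdj, heu]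
      have expand : (2 * j + 1) * (2 * j + 4 * u + 5)
          = 2 * ((j + u + 1) + (2 * j + 1) * (u + 1) + (2 * (j + u + 1) + 1) * j) + 1 := by
        ring
      have haux1 : u + 1 ≤ (2 * j + 1) * (u + 1) := Nat.le_mul_of_pos_left _ (by omega)
      have haux2 : j ≤ (2 * (j + u + 1) + 1) * j := Nat.le_mul_of_pos_left _ (by omega)
      refine ⟨⟨by omega, by omega, by omega, by omega⟩, by omega, by omega⟩
    · show ((j + u + 1, j), (j + u + 1 - j - 1, j)) = ((j + u + 1, j), (u, j))
      have : j + u + 1 - j - 1 = u := by omega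
      rw [this]

/-- Let `p` be an odd prime and `1 ≤ ℓ ≤ p − 1` with `((4ℓ+1)/p) = −1`. Then for all
`n ≥ 0`, `b(2(pn + ℓ)) ≡ 0 (mod 4)`. -/
theorem b_two_pn_ell (p ℓ : ℕ) [Fact p.Prime] (hodd : Odd p)
    (hl1 : 1 ≤ ℓ) (hl2 : ℓ ≤ p - 1)
    (hleg : legendreSym p (4 * (ℓ : ℤ) + 1) = -1) :
    ∀ n : ℕ, b (2 * (p * n + ℓ)) ≡ 0 [ZMOD 4] := by
  intro n
  set N : ℕ := 2 * (p * n + ℓ) with hN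
  have hm4 : (2 * N + 1) % 4 = 1 := by omega
  have hm0 : 0 < 2 * N + 1 := by omega
  have hns : ∀ k : ℕ, 2 * N + 1 ≠ k * k := by
    intro k hk
    have hcong : legendreSym p ((2 * N + 1 : ℕ) : ℤ) = legendreSym p (4 * (ℓ : ℤ) + 1) := by
      rw [legendreSym.mod p (((2 * N + 1 : ℕ) : ℤ)), legendreSym.mod p (4 * (ℓ : ℤ) + 1)]
      congr 1
      have hval : ((2 * N + 1 : ℕ) : ℤ) = 4 * (ℓ : ℤ) + 1 + (p : ℤ) * (4 * n) := by
        rw [hN]; push_cast; ring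
      rw [hval, Int.add_mul_emod_self_left]
    have hksq : legendreSym p ((2 * N + 1 : ℕ) : ℤ)
        = legendreSym p (k : ℤ) * legendreSym p (k : ℤ) := by
      rw [show ((2 * N + 1 : ℕ) : ℤ) = (k : ℤ) * (k : ℤ) by exact_mod_cast hk]
      exact legendreSym.mul p _ _
    have hnn : 0 ≤ legendreSym p (k : ℤ) * legendreSym p (k : ℤ) := mul_self_nonneg _
    rw [hksq, hleg] at hcong
    omega
  set q : ℕ := ((2 * N + 1).divisors.filter fun d => d * d < 2 * N + 1).card with hq
  have hD : Ddiv N = 2 * q := by rw [Ddiv_eq N, divisors_card_eq_two_mul _ hm0 hns]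
  have hq2 : ((Tcard N : ℕ) : ZMod 2) = ((q : ℕ) : ZMod 2) := by
    rw [Tcard_eq_Uset N,
      invol_parity (Uset N) invU (fun a ha => invU_mem ha) (fun a ha => invU_invol ha),
      fix_card N hm4]
  have hpar : Tcard N % 2 = q % 2 := (ZMod.natCast_eq_natCast_iff' _ _ _).mp hq2
  obtain ⟨s, hs⟩ : ∃ s, 2 * q + 2 * Tcard N = 4 * s := ⟨(q + Tcard N) / 2, by omega⟩
  have hzero : ((b N : ℤ) : ZMod 4) = 0 := by
    rw [bN_mod4 N, hD]
    calc ((2 * q : ℕ) : R4) + 2 * ((Tcard N : ℕ) : R4)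
        = ((2 * q + 2 * Tcard N : ℕ) : R4) := by push_cast; ring
      _ = ((4 * s : ℕ) : R4) := by rw [hs]
      _ = 0 := by
          push_cast
          rw [show (4 : R4) = 0 by decide, zero_mul]
  have hdvd : (4 : ℤ) ∣ b N := (ZMod.intCast_zmod_eq_zero_iff_dvd (b N) 4).mp hzero
  exact Int.modEq_zero_iff_dvd.mpr hdvd
end

section
/- Let p be an odd prime and let ℓ be an integer with 1 ≤ ℓ ≤ p − 1 such that the Legendre symbol ((8ℓ+1)/p) equals −1. Then for all integers n ≥ 0, b(4(pn + ℓ)) ≡ 0 (mod 8). -/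
open PowerSeries Finset

namespace MockBAux

variable {R : Type*} [CommRing R]

lemma nat_mul_sub (c k j : ℕ) : c * k - c * j = c * (k - j) := by
  rcases le_total j k with h | h
  · obtain ⟨d, rfl⟩ := Nat.exists_eq_add_of_le h
    have h1 : c * (j + d) = c * j + c * d := by ring
    have h2 : (j + d) - j = d := by omega
    rw [h2]
    omega
  · have h1 : c * k ≤ c * j := Nat.mul_le_mul_left c h
    have h2 : k - j = 0 := by omega
    rw [h2]
    omega

/-- The geometric series `1/(1-X^c) = Σ_{t, c ∣ t} X^t`. -/
noncomputable def geom (R : Type*) [CommRing R] (c : ℕ) : PowerSeries R :=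
  PowerSeries.mk fun t => if c ∣ t then 1 else 0

lemma coeff_geom (c t : ℕ) : coeff t (geom R c) = if c ∣ t then 1 else 0 :=
  coeff_mk _ _

lemma coeff_X_pow_mul'' (a : ℕ) (g : PowerSeries R) (N : ℕ) :
    coeff N ((X : PowerSeries R) ^ a * g) = if a ≤ N then coeff (N - a) g else 0 := by
  rw [mul_comm, PowerSeries.coeff_mul_X_pow']

lemma geom_mul (c : ℕ) (hc : 1 ≤ c) : geom R c * (1 - X ^ c) = 1 := by
  ext t
  rw [mul_sub, mul_one, map_sub, PowerSeries.coeff_mul_X_pow', coeff_geom, coeff_one]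
  by_cases h : c ∣ t
  · by_cases h0 : t = 0
    · subst h0
      have : ¬ c ≤ 0 := by omega
      simp [this]
    · have hct : c ≤ t := Nat.le_of_dvd (Nat.pos_of_ne_zero h0) h
      have h2 : c ∣ t - c := Nat.dvd_sub h dvd_rfl
      simp [h, hct, h2, coeff_geom, h0]
  · have h0 : t ≠ 0 := by rintro rfl; exact h (dvd_zero c)
    have h2 : c ≤ t → ¬ c ∣ t - c := by
      intro hct hd
      apply h
      have := Nat.dvd_add hd (dvd_refl c)
      rwa [Nat.sub_add_cancel hct] at this
    by_cases hct : c ≤ t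
    · simp [h, hct, coeff_geom, h2 hct, h0]
    · simp [h, hct, h0]

/-- Formal coefficientwise sum of a family of power series. -/
noncomputable def fsum (f : ℕ → PowerSeries R) : PowerSeries R :=
  PowerSeries.mk fun N => ∑ n ∈ range (N + 1), coeff N (f n)

/-- `Good f` means the `n`-th member of the family has `X`-adic valuation at least `n`. -/
def Good (f : ℕ → PowerSeries R) : Prop := ∀ ⦃n N : ℕ⦄, N < n → coeff N (f n) = 0

lemma coeff_fsum (f : ℕ → PowerSeries R) (N : ℕ) :
    coeff N (fsum f) = ∑ n ∈ range (N + 1), coeff N (f n) :=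
  coeff_mk _ _

lemma coeff_fsum_of_good {f : ℕ → PowerSeries R} (hf : Good f) {N M : ℕ} (h : N < M) :
    coeff N (fsum f) = ∑ n ∈ range M, coeff N (f n) := by
  rw [coeff_fsum]
  apply Finset.sum_subset (range_subset_range.mpr h)
  intro n _ hn
  exact hf (by simpa using hn)

lemma fsum_congr {f g : ℕ → PowerSeries R} (h : ∀ n, f n = g n) : fsum f = fsum g := by
  unfold fsum; congr 1; funext N; exact Finset.sum_congr rfl fun n _ => by rw [h n]

lemma fsum_add (f g : ℕ → PowerSeries R) :
    fsum (fun n => f n + g n) = fsum f + fsum g := by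
  ext N; simp [coeff_fsum, Finset.sum_add_distrib]

lemma fsum_sub (f g : ℕ → PowerSeries R) :
    fsum (fun n => f n - g n) = fsum f - fsum g := by
  ext N; simp [coeff_fsum, Finset.sum_sub_distrib]

lemma fsum_split (u v w : ℕ → PowerSeries R) :
    fsum (fun n => u n + v n - w n) = fsum u + fsum v - fsum w := by
  ext N; simp [coeff_fsum, Finset.sum_add_distrib, Finset.sum_sub_distrib]

lemma mul_fsum (g : PowerSeries R) {f : ℕ → PowerSeries R} (hf : Good f) :
    g * fsum f = fsum fun n => g * f n := by
  ext N
  rw [coeff_fsum, PowerSeries.coeff_mul]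
  have h1 : ∀ p ∈ antidiagonal N,
      coeff p.1 g * coeff p.2 (fsum f)
        = ∑ n ∈ range (N + 1), coeff p.1 g * coeff p.2 (f n) := by
    intro p hp
    rw [coeff_fsum_of_good hf (Nat.lt_succ_of_le (Finset.HasAntidiagonal.antidiagonal.snd_le hp)), Finset.mul_sum]
  rw [Finset.sum_congr rfl h1, Finset.sum_comm]
  exact Finset.sum_congr rfl fun n _ => (PowerSeries.coeff_mul _ _ _).symm

lemma good_mul (g : PowerSeries R) {f : ℕ → PowerSeries R} (hf : Good f) :
    Good (fun n => g * f n) := by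
  intro n N h
  rw [PowerSeries.coeff_mul]
  apply Finset.sum_eq_zero
  intro p hp
  have : p.2 ≤ N := Finset.HasAntidiagonal.antidiagonal.snd_le hp
  rw [hf (lt_of_le_of_lt this h), mul_zero]

lemma fsum_shift {f : ℕ → PowerSeries R} (hf : Good f) :
    fsum f = f 0 + fsum fun n => f (n + 1) := by
  ext N
  rw [map_add]
  have h2 : coeff N (fsum fun n => f (n + 1)) = ∑ n ∈ range N, coeff N (f (n + 1)) := by
    rw [coeff_fsum, Finset.sum_range_succ]
    have h0 : coeff N (f (N + 1)) = 0 := hf (Nat.lt_succ_self N)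
    rw [h0, add_zero]
  rw [coeff_fsum, h2, Finset.sum_range_succ' (fun n => coeff N (f n)) N]
  ring

/-! ### The two sides of the Rogers–Fine identity -/

noncomputable def Aa (c n : ℕ) : PowerSeries ℤ := ∏ j ∈ range n, (1 + X ^ (c + 2 * j))

noncomputable def Bg (c n : ℕ) : PowerSeries ℤ := ∏ j ∈ range (n + 1), geom ℤ (c + 2 * j)

noncomputable def fT (c n : ℕ) : PowerSeries ℤ := X ^ (c * n) * Aa c n * Bg c n

noncomputable def TT (c : ℕ) : PowerSeries ℤ := fsum (fT c)

noncomputable def fV (c n : ℕ) : PowerSeries ℤ := X ^ (c * n) * Aa (c + 2) n * Bg (c + 2) n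

noncomputable def VV (c : ℕ) : PowerSeries ℤ := fsum (fV c)

noncomputable def fW (c m : ℕ) : PowerSeries ℤ :=
  X ^ ((c + 2) * (m + 1)) * Aa (c + 2) (m + 1) * Bg (c + 4) m

noncomputable def WW (c : ℕ) : PowerSeries ℤ := fsum (fW c)

noncomputable def fG (c n : ℕ) : PowerSeries ℤ :=
  X ^ (2 * c * n + 2 * n ^ 2) * (1 + X ^ (2 * c + 4 * n))
    * (∏ j ∈ range n, ((1 + X ^ (c + 2 * j)) * geom ℤ (c + 2 * j)) ^ 2)
    * (geom ℤ (c + 2 * n)) ^ 2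

noncomputable def GG (c : ℕ) : PowerSeries ℤ := fsum (fG c)

/-! ### Structure lemmas for the building blocks -/

lemma Aa_zero (c : ℕ) : Aa c 0 = 1 := by simp [Aa]

lemma Aa_succ_head (c n : ℕ) : Aa c (n + 1) = (1 + X ^ c) * Aa (c + 2) n := by
  rw [Aa, Finset.prod_range_succ']
  have h1 : ∏ k ∈ range n, (1 + (X : PowerSeries ℤ) ^ (c + 2 * (k + 1))) = Aa (c + 2) n := by
    unfold Aa
    exact Finset.prod_congr rfl fun j _ => by rw [show c + 2 * (j + 1) = c + 2 + 2 * j by ring]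
  rw [h1, show c + 2 * 0 = c by ring, mul_comm]

lemma Aa_succ_last (c n : ℕ) : Aa c (n + 1) = Aa c n * (1 + X ^ (c + 2 * n)) :=
  Finset.prod_range_succ _ _

lemma Bg_zero (c : ℕ) : Bg c 0 = geom ℤ c := by simp [Bg]

lemma Bg_succ_head (c n : ℕ) : Bg c (n + 1) = geom ℤ c * Bg (c + 2) n := by
  rw [Bg, Finset.prod_range_succ']
  have h1 : ∏ k ∈ range (n + 1), geom ℤ (c + 2 * (k + 1)) = Bg (c + 2) n := by
    unfold Bg
    exact Finset.prod_congr rfl fun j _ => by rw [show c + 2 * (j + 1) = c + 2 + 2 * j by ring]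
  rw [h1, show c + 2 * 0 = c by ring, mul_comm]

lemma Bg_succ_last (c n : ℕ) : Bg c (n + 1) = Bg c n * geom ℤ (c + 2 * (n + 1)) :=
  Finset.prod_range_succ _ _

/-! ### Goodness of the families -/

lemma good_X_pow_factor {a : ℕ} {g : PowerSeries ℤ} {N : ℕ} (h : N < a) :
    coeff N ((X : PowerSeries ℤ) ^ a * g) = 0 := by
  rw [coeff_X_pow_mul'']
  simp [Nat.not_le.mpr h]

lemma good_fT {c : ℕ} (hc : 1 ≤ c) : Good (fT c) := by
  intro n N h
  have hn : N < c * n := lt_of_lt_of_le h (by nlinarith)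
  rw [fT, mul_assoc]
  exact good_X_pow_factor hn

lemma good_fV {c : ℕ} (hc : 1 ≤ c) : Good (fV c) := by
  intro n N h
  have hn : N < c * n := lt_of_lt_of_le h (by nlinarith)
  rw [fV, mul_assoc]
  exact good_X_pow_factor hn

lemma good_fW (c : ℕ) : Good (fW c) := by
  intro n N h
  have hn : N < (c + 2) * (n + 1) := lt_of_lt_of_le h (by nlinarith)
  rw [fW, mul_assoc]
  exact good_X_pow_factor hn

lemma good_fG {c : ℕ} (hc : 1 ≤ c) : Good (fG c) := by
  intro n N h
  have hn : N < 2 * c * n + 2 * n ^ 2 := lt_of_lt_of_le h (by nlinarith)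
  rw [fG, mul_assoc, mul_assoc]
  exact good_X_pow_factor hn

/-! ### Per-term identities -/

lemma P1 (c : ℕ) (hc : 1 ≤ c) : (1 - X ^ c) * fT c 0 = 1 := by
  have hG := geom_mul (R := ℤ) c hc
  rw [fT, Aa_zero, Bg_zero]
  linear_combination hG

lemma P2 (c n : ℕ) (hc : 1 ≤ c) :
    (1 - X ^ c) * fT c (n + 1) = ((1 + X ^ c) * X ^ c) * fV c n := by
  have hG := geom_mul (R := ℤ) c hc
  rw [fT, fV, Aa_succ_head, Bg_succ_head]
  linear_combination (X ^ (c * n) * X ^ c * (1 + X ^ c) * Aa (c + 2) n * Bg (c + 2) n) * hG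

lemma P4 (c m : ℕ) :
    (1 - X ^ (c + 2)) * fT (c + 2) (m + 1) = fW c m := by
  have hG := geom_mul (R := ℤ) (c + 2) (by omega)
  rw [fT, fW, Bg_succ_head, show c + 2 + 2 = c + 4 by ring]
  linear_combination (X ^ ((c + 2) * (m + 1)) * Aa (c + 2) (m + 1) * Bg (c + 4) m) * hG

set_option maxHeartbeats 1000000 in
lemma P5 (c m : ℕ) :
    fV c (m + 1) - fT (c + 2) (m + 1)
      = X ^ c * fV c m + X ^ (2 * c + 2) * fT (c + 2) m - fW c m := by
  have hG := geom_mul (R := ℤ) (c + 2) (by omega)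
  have hBsucc : Bg (c + 2) (m + 1) = geom ℤ (c + 2) * Bg (c + 4) m := by
    rw [Bg_succ_head, show c + 2 + 2 = c + 4 by ring]
  have hBm : Bg (c + 2) m
      = geom ℤ (c + 2) * Bg (c + 4) m * (1 - X ^ (c + 2 + 2 * (m + 1))) := by
    have h1 : Bg (c + 2) (m + 1) * (1 - X ^ (c + 2 + 2 * (m + 1))) = Bg (c + 2) m := by
      rw [Bg_succ_last]
      have hL := geom_mul (R := ℤ) (c + 2 + 2 * (m + 1)) (by omega)
      linear_combination Bg (c + 2) m * hL
    rw [← h1, hBsucc]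
  simp only [fV, fT, fW]
  rw [Aa_succ_last, hBsucc, hBm]
  linear_combination (-(Aa (c + 2) m * Bg (c + 4) m * X ^ (c * m + c) * X ^ (2 * m + 2)
    * (1 + X ^ c * X ^ (2 * m + 2)))) * hG

lemma P6 (c : ℕ) (hc : 1 ≤ c) :
    (1 - X ^ c) ^ 2 * fG c 0 = 1 + X ^ (2 * c) := by
  have hG := geom_mul (R := ℤ) c hc
  rw [fG, show 2 * c * 0 + 2 * 0 ^ 2 = 0 by ring, show 2 * c + 4 * 0 = 2 * c by ring,
    show c + 2 * 0 = c by ring]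
  simp only [Finset.range_zero, Finset.prod_empty, pow_zero, one_mul, mul_one]
  linear_combination ((1 + X ^ (2 * c)) * (geom ℤ c * (1 - X ^ c) + 1)) * hG

set_option maxHeartbeats 1000000 in
lemma P7 (c n : ℕ) (hc : 1 ≤ c) :
    (1 - X ^ c) ^ 2 * fG c (n + 1) = (X ^ (2 * c + 2) * (1 + X ^ c) ^ 2) * fG (c + 2) n := by
  have hG := geom_mul (R := ℤ) c hc
  have hprod : (∏ j ∈ range (n + 1), ((1 + X ^ (c + 2 * j)) * geom ℤ (c + 2 * j)) ^ 2)
      = ((1 + X ^ c) * geom ℤ c) ^ 2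
        * ∏ j ∈ range n, ((1 + X ^ (c + 2 + 2 * j)) * geom ℤ (c + 2 + 2 * j)) ^ 2 := by
    rw [Finset.prod_range_succ']
    have h1 : ∏ k ∈ range n, ((1 + (X : PowerSeries ℤ) ^ (c + 2 * (k + 1)))
        * geom ℤ (c + 2 * (k + 1))) ^ 2
        = ∏ j ∈ range n, ((1 + X ^ (c + 2 + 2 * j)) * geom ℤ (c + 2 + 2 * j)) ^ 2 :=
      Finset.prod_congr rfl fun j _ => by rw [show c + 2 * (j + 1) = c + 2 + 2 * j by ring]
    rw [h1, show c + 2 * 0 = c by ring, mul_comm]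
  rw [fG, fG, hprod, show c + 2 * (n + 1) = c + 2 + 2 * n by ring,
    show 2 * c + 4 * (n + 1) = 2 * (c + 2) + 4 * n by ring]
  linear_combination (X ^ (2 * c * (n + 1) + 2 * (n + 1) ^ 2)
      * (1 + X ^ (2 * (c + 2) + 4 * n))
      * (∏ j ∈ range n, ((1 + X ^ (c + 2 + 2 * j)) * geom ℤ (c + 2 + 2 * j)) ^ 2)
      * (geom ℤ (c + 2 + 2 * n)) ^ 2
      * (1 + X ^ c) ^ 2 * (geom ℤ c * (1 - X ^ c) + 1)) * hG

/-! ### The functional equations -/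

lemma E1 (c : ℕ) (hc : 1 ≤ c) :
    (1 - X ^ c) * TT c = 1 + ((1 + X ^ c) * X ^ c) * VV c := by
  rw [TT, mul_fsum _ (good_fT hc), fsum_shift (good_mul _ (good_fT hc))]
  beta_reduce
  rw [P1 c hc, fsum_congr (fun n => P2 c n hc), ← mul_fsum _ (good_fV hc), ← VV]

lemma E3 (c : ℕ) :
    (1 - X ^ (c + 2)) * TT (c + 2) = 1 + WW c := by
  rw [TT, mul_fsum _ (good_fT (c := c + 2) (by omega)),
    fsum_shift (good_mul _ (good_fT (c := c + 2) (by omega)))]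
  beta_reduce
  rw [P1 (c + 2) (by omega), fsum_congr (fun n => P4 c n), ← WW]

lemma E4 (c : ℕ) (hc : 1 ≤ c) :
    VV c - TT (c + 2)
      = X ^ c * VV c + X ^ (2 * c + 2) * TT (c + 2) - WW c := by
  have h0 : fV c 0 - fT (c + 2) 0 = 0 := by
    simp [fV, fT]
  have hgood : Good (fun m => fV c m - fT (c + 2) m) := by
    intro n N h
    rw [map_sub, good_fV hc h, good_fT (c := c + 2) (by omega) h, sub_self]
  calc VV c - TT (c + 2) = fsum (fun m => fV c m - fT (c + 2) m) := (fsum_sub _ _).symm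
    _ = (fV c 0 - fT (c + 2) 0) + fsum (fun m => fV c (m + 1) - fT (c + 2) (m + 1)) :=
        fsum_shift hgood
    _ = fsum (fun m => X ^ c * fV c m + X ^ (2 * c + 2) * fT (c + 2) m - fW c m) := by
        rw [h0, zero_add]; exact fsum_congr (fun m => P5 c m)
    _ = fsum (fun m => X ^ c * fV c m) + fsum (fun m => X ^ (2 * c + 2) * fT (c + 2) m)
          - fsum (fW c) := fsum_split _ _ _
    _ = X ^ c * VV c + X ^ (2 * c + 2) * TT (c + 2) - WW c := by
        rw [← mul_fsum _ (good_fV hc), ← mul_fsum _ (good_fT (c := c + 2) (by omega))]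
        rfl

lemma FE (c : ℕ) (hc : 1 ≤ c) :
    (1 - X ^ c) ^ 2 * TT c
      = 1 + X ^ (2 * c) + X ^ (2 * c + 2) * (1 + X ^ c) ^ 2 * TT (c + 2) := by
  have h1 := E1 c hc
  have h3 := E3 c
  have h4 := E4 c hc
  have h2 : (1 - X ^ c) * VV c
      = 1 + (X ^ (c + 2) + X ^ (2 * c + 2)) * TT (c + 2) := by
    linear_combination h4 + h3
  linear_combination (1 - X ^ c) * h1 + ((1 + X ^ c) * X ^ c) * h2

lemma FE_G (c : ℕ) (hc : 1 ≤ c) :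
    (1 - X ^ c) ^ 2 * GG c
      = 1 + X ^ (2 * c) + X ^ (2 * c + 2) * (1 + X ^ c) ^ 2 * GG (c + 2) := by
  rw [GG, mul_fsum _ (good_fG hc), fsum_shift (good_mul _ (good_fG hc))]
  beta_reduce
  rw [P6 c hc, fsum_congr (fun n => P7 c n hc), ← mul_fsum _ (good_fG (c := c + 2) (by omega)),
    ← GG]

/-! ### `TT = GG` by strong induction on the coefficient -/

lemma TT_eq_GG_coeff : ∀ N : ℕ, ∀ c : ℕ, 1 ≤ c → coeff N (TT c) = coeff N (GG c) := by
  intro N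
  induction N using Nat.strong_induction_on with
  | _ N ih =>
    intro c hc
    have key : TT c - GG c
        = X ^ c * (TT c - GG c) + X ^ c * (TT c - GG c) - X ^ (2 * c) * (TT c - GG c)
          + X ^ (2 * c + 2) * (TT (c + 2) - GG (c + 2))
          + X ^ (3 * c + 2) * (TT (c + 2) - GG (c + 2))
          + X ^ (3 * c + 2) * (TT (c + 2) - GG (c + 2))
          + X ^ (4 * c + 2) * (TT (c + 2) - GG (c + 2)) := by
      have hT := FE c hc
      have hG := FE_G c hc
      linear_combination hT - hG
    have z : ∀ a c' : ℕ, 1 ≤ a → 1 ≤ c' →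
        coeff N ((X : PowerSeries ℤ) ^ a * (TT c' - GG c')) = 0 := by
      intro a c' ha hc'
      rw [coeff_X_pow_mul'']
      split_ifs with h
      · rw [map_sub, ih (N - a) (by omega) c' hc', sub_self]
      · rfl
    have hthis := congrArg (coeff N) key
    simp only [map_add, map_sub] at hthis
    rw [z c c hc hc, z (2 * c) c (by omega) hc, z (2 * c + 2) (c + 2) (by omega) (by omega),
      z (3 * c + 2) (c + 2) (by omega) (by omega), z (4 * c + 2) (c + 2) (by omega) (by omega)]
      at hthis
    linarith

lemma TT_eq_GG : TT 1 = GG 1 :=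
  PowerSeries.ext fun N => TT_eq_GG_coeff N 1 le_rfl

/-! ### `mockB = TT 1` -/

lemma invOfUnit_eq' (u g : PowerSeries R) (h1 : constantCoeff u = 1) (hg : u * g = 1) :
    PowerSeries.invOfUnit u 1 = g := by
  have h2 : u * PowerSeries.invOfUnit u 1 = 1 :=
    PowerSeries.mul_invOfUnit u 1 (by rw [h1, Units.val_one])
  calc PowerSeries.invOfUnit u 1 = 1 * PowerSeries.invOfUnit u 1 := (one_mul _).symm
    _ = (g * u) * PowerSeries.invOfUnit u 1 := by rw [mul_comm g u, hg]
    _ = g * (u * PowerSeries.invOfUnit u 1) := mul_assoc _ _ _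
    _ = g := by rw [h2, mul_one]

lemma mockBterm_eq (n : ℕ) : mockBterm n = fT 1 n := by
  have hinv : PowerSeries.invOfUnit
      (∏ j ∈ range (n + 1), (1 - (X : PowerSeries ℤ) ^ (2 * j + 1))) 1 = Bg 1 n := by
    apply invOfUnit_eq'
    · rw [map_prod]
      apply Finset.prod_eq_one
      intro j _
      rw [map_sub, map_one, map_pow, PowerSeries.constantCoeff_X]
      rw [zero_pow (by omega : 2 * j + 1 ≠ 0), sub_zero]
    · rw [Bg, ← Finset.prod_mul_distrib]
      apply Finset.prod_eq_one
      intro j _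
      rw [show 1 + 2 * j = 2 * j + 1 by ring, mul_comm]
      exact geom_mul (2 * j + 1) (by omega)
  rw [mockBterm, fT, hinv]
  have h1 : (X : PowerSeries ℤ) ^ n = X ^ (1 * n) := by rw [one_mul]
  have h2 : (∏ j ∈ range n, (1 + (X : PowerSeries ℤ) ^ (2 * j + 1))) = Aa 1 n := by
    rw [Aa]
    exact Finset.prod_congr rfl fun j _ => by rw [show 2 * j + 1 = 1 + 2 * j by ring]
  rw [h1, h2]

lemma mockB_eq : mockB = TT 1 := by
  rw [mockB, TT, fsum]
  congr 1
  funext N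
  exact Finset.sum_congr rfl fun n _ => by rw [mockBterm_eq]

/-! ### Reduction mod 8 -/

/-- `Σ_{a ≥ 1} a X^{a c}` over `ZMod 8`. -/
noncomputable def sZ (c : ℕ) : PowerSeries (ZMod 8) :=
  PowerSeries.mk fun t => if c ∣ t ∧ 1 ≤ t then ((t / c : ℕ) : ZMod 8) else 0

/-- `(geom c)^2` has coefficients `t/c + 1` at multiples of `c`. -/
noncomputable def gg (c : ℕ) : PowerSeries (ZMod 8) :=
  PowerSeries.mk fun t => if c ∣ t then ((t / c + 1 : ℕ) : ZMod 8) else 0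

lemma geom_sq (c : ℕ) (hc : 1 ≤ c) : (geom (ZMod 8) c) ^ 2 = gg c := by
  have h1 : (1 - X ^ c) * gg c = geom (ZMod 8) c := by
    ext t
    have hsplit : (1 - (X : PowerSeries (ZMod 8)) ^ c) * gg c = gg c - X ^ c * gg c := by ring
    rw [hsplit, map_sub, coeff_X_pow_mul'', coeff_geom]
    simp only [gg, coeff_mk]
    by_cases h : c ∣ t
    · obtain ⟨k, rfl⟩ := h
      have hdiv1 : c * k / c = k := Nat.mul_div_cancel_left _ (by omega)
      by_cases hk : k = 0
      · subst hk
        have h0 : ¬ c ≤ c * 0 := by omega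
        simp [h0, hdiv1, show c ≠ 0 by omega]
      · have hk1 : 1 ≤ k := Nat.pos_of_ne_zero hk
        have hct : c ≤ c * k := by nlinarith
        have hsub : c * k - c = c * (k - 1) := by
          rw [show c * k - c = c * k - c * 1 by rw [mul_one], nat_mul_sub]
        have hd2 : c ∣ c * k - c := by rw [hsub]; exact dvd_mul_right _ _
        have hdiv2 : (c * k - c) / c = k - 1 := by
          rw [hsub, Nat.mul_div_cancel_left _ (by omega : 0 < c)]
        simp only [dvd_mul_right, if_true, hct, if_pos, hd2, hdiv1, hdiv2]
        have e1 : (k - 1 + 1 : ℕ) = k := by omega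
        rw [e1]
        have e2 : ((k + 1 : ℕ) : ZMod 8) = (k : ZMod 8) + 1 := by push_cast; ring
        rw [e2]
        ring
    · have ht2 : c ≤ t → ¬ c ∣ t - c := by
        intro hct hd
        apply h
        have := Nat.dvd_add hd (dvd_refl c)
        rwa [Nat.sub_add_cancel hct] at this
      by_cases hct : c ≤ t
      · simp [h, hct, ht2 hct]
      · simp [h, hct]
  calc (geom (ZMod 8) c) ^ 2 = geom (ZMod 8) c * geom (ZMod 8) c := sq _
    _ = geom (ZMod 8) c * ((1 - X ^ c) * gg c) := by rw [h1]
    _ = (geom (ZMod 8) c * (1 - X ^ c)) * gg c := by ring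
    _ = gg c := by rw [geom_mul c hc, one_mul]

lemma sZ_eq (c : ℕ) (hc : 1 ≤ c) :
    (1 + X ^ (2 * c)) * (geom (ZMod 8) c) ^ 2 = 1 + 2 * sZ c := by
  rw [geom_sq c hc]
  ext t
  have hsplit : (1 + (X : PowerSeries (ZMod 8)) ^ (2 * c)) * gg c
      = gg c + X ^ (2 * c) * gg c := by ring
  have h2 : coeff t (2 * sZ c) = 2 * coeff t (sZ c) := by
    have hh : (2 : PowerSeries (ZMod 8)) * sZ c = sZ c + sZ c := by ring
    rw [hh, map_add, two_mul]
  rw [hsplit, map_add, map_add, coeff_X_pow_mul'', coeff_one, h2]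
  simp only [gg, sZ, coeff_mk]
  by_cases h : c ∣ t
  · obtain ⟨k, rfl⟩ := h
    have hdiv1 : c * k / c = k := Nat.mul_div_cancel_left _ (by omega)
    by_cases hk : k = 0
    · subst hk
      have h1 : ¬ 2 * c ≤ c * 0 := by omega
      have h3 : ¬ (c ∣ c * 0 ∧ 1 ≤ c * 0) := by
        rintro ⟨-, hh⟩; omega
      simp [h1, h3, hdiv1, show c ≠ 0 by omega]
    · have hk1 : 1 ≤ k := Nat.pos_of_ne_zero hk
      have ht0 : ¬ (c * k = 0) := Nat.mul_ne_zero (by omega) hk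
      have hd : c ∣ c * k ∧ 1 ≤ c * k := ⟨dvd_mul_right _ _, by omega⟩
      by_cases hk2 : 2 ≤ k
      · have hle : 2 * c ≤ c * k := by nlinarith
        have hsub : c * k - 2 * c = c * (k - 2) := by
          rw [show (2 * c : ℕ) = c * 2 by omega, nat_mul_sub]
        have hd2 : c ∣ c * k - 2 * c := by rw [hsub]; exact dvd_mul_right _ _
        have hdiv2 : (c * k - 2 * c) / c = k - 2 := by
          rw [hsub, Nat.mul_div_cancel_left _ (by omega : 0 < c)]
        simp only [dvd_mul_right, if_true, hle, if_pos, hd2, hdiv1, hdiv2, ht0, if_neg, hd]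
        have e1n : (k - 2 + 1 : ℕ) = k - 1 := by omega
        have e2 : ((k - 1 : ℕ) : ZMod 8) = (k : ZMod 8) - 1 := by
          have h' := congrArg (fun m : ℕ => (m : ZMod 8)) (show (k - 1) + 1 = k by omega)
          push_cast at h'
          linear_combination h'
        have e3 : ((k + 1 : ℕ) : ZMod 8) = (k : ZMod 8) + 1 := by push_cast; ring
        rw [e1n, e2, e3]
        simp only [if_pos, if_true, if_false]
        push_cast
        ring_nf
        simp
        try ring
      · have hkeq : k = 1 := by omega
        subst hkeq
        have hle : ¬ 2 * c ≤ c * 1 := by omega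
        simp only [dvd_mul_right, if_true, hle, if_false, hdiv1, ht0, if_neg, hd]
        norm_num
  · have h1 : ¬ (c ∣ t ∧ 1 ≤ t) := fun hh => h hh.1
    have h0 : t ≠ 0 := by rintro rfl; exact h (dvd_zero c)
    by_cases hct : 2 * c ≤ t
    · have hnd : ¬ c ∣ t - 2 * c := by
        intro hd
        apply h
        have := Nat.dvd_add hd (dvd_mul_left c 2)
        rwa [Nat.sub_add_cancel hct] at this
      simp [h, h1, hct, hnd, h0]
    · simp [h, h1, hct, h0]

/-- `y c = X^c geom c + (X^c geom c)^2 = Σ_{a≥1} a X^{ac}`. -/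
noncomputable def yZ (c : ℕ) : PowerSeries (ZMod 8) :=
  X ^ c * geom (ZMod 8) c + (X ^ c * geom (ZMod 8) c) ^ 2

lemma coeff_yZ (c t : ℕ) (hc : 1 ≤ c) :
    coeff t (yZ c) = if c ∣ t ∧ 1 ≤ t then ((t / c : ℕ) : ZMod 8) else 0 := by
  have hy : yZ c = X ^ c * geom (ZMod 8) c + X ^ (2 * c) * gg c := by
    rw [yZ, ← geom_sq c hc]
    ring
  rw [hy, map_add, coeff_X_pow_mul'', coeff_X_pow_mul'', coeff_geom]
  simp only [gg, coeff_mk]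
  by_cases h : c ∣ t
  · obtain ⟨k, rfl⟩ := h
    have hdiv1 : c * k / c = k := Nat.mul_div_cancel_left _ (by omega)
    by_cases hk : k = 0
    · subst hk
      have h1 : ¬ c ≤ c * 0 := by omega
      have h2 : ¬ 2 * c ≤ c * 0 := by omega
      have h3 : ¬ (c ∣ c * 0 ∧ 1 ≤ c * 0) := by rintro ⟨-, hh⟩; omega
      simp [h1, h2, h3, show c ≠ 0 by omega]
    · have hk1 : 1 ≤ k := Nat.pos_of_ne_zero hk
      have ht1 : 1 ≤ c * k := by
        have := Nat.mul_ne_zero (by omega : c ≠ 0) hk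
        omega
      have hle1 : c ≤ c * k := by nlinarith
      have hsub1 : c * k - c = c * (k - 1) := by
        rw [show c * k - c = c * k - c * 1 by rw [mul_one], nat_mul_sub]
      have hd1 : c ∣ c * k - c := by rw [hsub1]; exact dvd_mul_right _ _
      have hd : c ∣ c * k ∧ 1 ≤ c * k := ⟨dvd_mul_right _ _, ht1⟩
      by_cases hk2 : 2 ≤ k
      · have hle2 : 2 * c ≤ c * k := by nlinarith
        have hsub2 : c * k - 2 * c = c * (k - 2) := by
          rw [show (2 * c : ℕ) = c * 2 by omega, nat_mul_sub]
        have hd2 : c ∣ c * k - 2 * c := by rw [hsub2]; exact dvd_mul_right _ _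
        have hdiv2 : (c * k - 2 * c) / c = k - 2 := by
          rw [hsub2, Nat.mul_div_cancel_left _ (by omega : 0 < c)]
        simp only [hle1, if_true, hd1, hle2, hd2, hdiv2, hdiv1, hd, if_pos]
        have e1n : (k - 2 + 1 : ℕ) = k - 1 := by omega
        have e2 : ((k - 1 : ℕ) : ZMod 8) = (k : ZMod 8) - 1 := by
          have h' := congrArg (fun m : ℕ => (m : ZMod 8)) (show (k - 1) + 1 = k by omega)
          push_cast at h'
          linear_combination h'
        rw [e1n, e2]
        simp
      · have hkeq : k = 1 := by omega
        subst hkeq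
        have hle2 : ¬ 2 * c ≤ c * 1 := by omega
        simp only [hle1, if_true, hd1, hle2, if_false, hdiv1, hd, if_pos]
        norm_num
  · have hh : ¬ (c ∣ t ∧ 1 ≤ t) := fun hh => h hh.1
    have hnd1 : c ≤ t → ¬ c ∣ t - c := by
      intro hct hd
      apply h
      have := Nat.dvd_add hd (dvd_refl c)
      rwa [Nat.sub_add_cancel hct] at this
    have hnd2 : 2 * c ≤ t → ¬ c ∣ t - 2 * c := by
      intro hct hd
      apply h
      have := Nat.dvd_add hd (dvd_mul_left c 2)
      rwa [Nat.sub_add_cancel hct] at this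
    by_cases hct1 : c ≤ t
    · by_cases hct2 : 2 * c ≤ t
      · simp [hh, hct1, hct2, hnd1 hct1, hnd2 hct2]
      · simp [hh, hct1, hct2, hnd1 hct1]
    · have hct2 : ¬ 2 * c ≤ t := by omega
      simp [hh, hct1, hct2]

lemma sixteen_zero : (16 : PowerSeries (ZMod 8)) = 0 := by
  have h1 : (16 : PowerSeries (ZMod 8)) = ((16 : ℕ) : PowerSeries (ZMod 8)) := by norm_num
  rw [h1, ← map_natCast (C (R := ZMod 8)) 16]
  have h2 : ((16 : ℕ) : ZMod 8) = 0 := by decide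
  rw [h2, map_zero]

lemma eight_zero : (8 : PowerSeries (ZMod 8)) = 0 := by
  have h1 : (8 : PowerSeries (ZMod 8)) = ((8 : ℕ) : PowerSeries (ZMod 8)) := by norm_num
  rw [h1, ← map_natCast (C (R := ZMod 8)) 8]
  have h2 : ((8 : ℕ) : ZMod 8) = 0 := by decide
  rw [h2, map_zero]

lemma one_add_sq (w : ℕ) (hw : 1 ≤ w) :
    ((1 + X ^ w) * geom (ZMod 8) w) ^ 2 = 1 + 4 * yZ w := by
  have hG := geom_mul (R := ZMod 8) w hw
  rw [yZ]
  linear_combination ((1 + 3 * X ^ w) * geom (ZMod 8) w + 1) * hG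

lemma prod_one_add_four (n : ℕ) (f : ℕ → PowerSeries (ZMod 8)) :
    (∏ j ∈ range n, (1 + 4 * f j)) = 1 + 4 * ∑ j ∈ range n, f j := by
  induction n with
  | zero => simp
  | succ m ih =>
    rw [Finset.prod_range_succ, ih, Finset.sum_range_succ]
    have h16 := sixteen_zero
    linear_combination ((∑ j ∈ range m, f j) * f m) * h16

/-! ### Mapping to `ZMod 8` -/

noncomputable def toZ8 : PowerSeries ℤ →+* PowerSeries (ZMod 8) :=
  PowerSeries.map (Int.castRingHom (ZMod 8))

lemma toZ8_coeff (N : ℕ) (f : PowerSeries ℤ) :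
    coeff N (toZ8 f) = ((coeff N f : ℤ) : ZMod 8) :=
  PowerSeries.coeff_map _ _ _

lemma toZ8_X : toZ8 X = X := PowerSeries.map_X _

lemma toZ8_geom (c : ℕ) : toZ8 (geom ℤ c) = geom (ZMod 8) c := by
  ext t
  rw [toZ8_coeff, coeff_geom, coeff_geom]
  split_ifs <;> simp

/-- The image of `fG c n` in `ZMod 8`. -/
lemma toZ8_fG (c n : ℕ) :
    toZ8 (fG c n) = X ^ (2 * c * n + 2 * n ^ 2) * (1 + X ^ (2 * c + 4 * n))
      * (∏ j ∈ range n, ((1 + X ^ (c + 2 * j)) * geom (ZMod 8) (c + 2 * j)) ^ 2)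
      * (geom (ZMod 8) (c + 2 * n)) ^ 2 := by
  rw [fG]
  rw [map_mul, map_mul, map_mul, map_pow, map_add, map_pow, map_prod, map_pow, map_one, toZ8_X]
  congr 2
  · exact Finset.prod_congr rfl fun j _ => by
      rw [map_pow, map_mul, map_add, map_one, map_pow, toZ8_X, toZ8_geom]
  · rw [toZ8_geom]

/-- Key reduction: mod 8, `fG c n` is `X^E (1 + 2 sZ(c+2n)) (1 + 4 Σ y)`. -/
lemma fG_mod8 (c n : ℕ) (hc : 1 ≤ c) :
    toZ8 (fG c n)
      = X ^ (2 * c * n + 2 * n ^ 2)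
        + 2 * (X ^ (2 * c * n + 2 * n ^ 2) * sZ (c + 2 * n))
        + 4 * (X ^ (2 * c * n + 2 * n ^ 2) * ∑ j ∈ range n, yZ (c + 2 * j)) := by
  rw [toZ8_fG]
  have hprod : (∏ j ∈ range n, ((1 + X ^ (c + 2 * j)) * geom (ZMod 8) (c + 2 * j)) ^ 2)
      = 1 + 4 * ∑ j ∈ range n, yZ (c + 2 * j) := by
    rw [Finset.prod_congr rfl fun j _ => one_add_sq (c + 2 * j) (by omega)]
    exact prod_one_add_four n _
  have hs : (1 + X ^ (2 * c + 4 * n)) * (geom (ZMod 8) (c + 2 * n)) ^ 2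
      = 1 + 2 * sZ (c + 2 * n) := by
    rw [show 2 * c + 4 * n = 2 * (c + 2 * n) by ring]
    exact sZ_eq (c + 2 * n) (by omega)
  calc X ^ (2 * c * n + 2 * n ^ 2) * (1 + X ^ (2 * c + 4 * n))
      * (∏ j ∈ range n, ((1 + X ^ (c + 2 * j)) * geom (ZMod 8) (c + 2 * j)) ^ 2)
      * (geom (ZMod 8) (c + 2 * n)) ^ 2
      = X ^ (2 * c * n + 2 * n ^ 2) * ((1 + X ^ (2 * c + 4 * n))
          * (geom (ZMod 8) (c + 2 * n)) ^ 2)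
        * (∏ j ∈ range n, ((1 + X ^ (c + 2 * j)) * geom (ZMod 8) (c + 2 * j)) ^ 2) := by ring
    _ = X ^ (2 * c * n + 2 * n ^ 2) * (1 + 2 * sZ (c + 2 * n))
        * (1 + 4 * ∑ j ∈ range n, yZ (c + 2 * j)) := by rw [hprod, hs]
    _ = X ^ (2 * c * n + 2 * n ^ 2)
        + 2 * (X ^ (2 * c * n + 2 * n ^ 2) * sZ (c + 2 * n))
        + 4 * (X ^ (2 * c * n + 2 * n ^ 2) * ∑ j ∈ range n, yZ (c + 2 * j)) := by
      have h8 := eight_zero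
      linear_combination (X ^ (2 * c * n + 2 * n ^ 2) * sZ (c + 2 * n)
        * (∑ j ∈ range n, yZ (c + 2 * j))) * h8

/-! ### Arithmetic lemmas -/

lemma odd_sq (x : ℕ) : ∃ y : ℕ, (2 * x + 1) ^ 2 = 8 * y + 1 := by
  obtain ⟨y, hy⟩ := Nat.even_mul_succ_self x
  exact ⟨y, by nlinarith⟩

lemma two_mod8 (k : ℕ) (h : 4 ∣ k) : (2 : ZMod 8) * (k : ZMod 8) = 0 := by
  obtain ⟨j, rfl⟩ := h
  have h8 : ((8 : ℕ) : ZMod 8) = 0 := by decide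
  calc (2 : ZMod 8) * ((4 * j : ℕ) : ZMod 8) = ((8 : ℕ) : ZMod 8) * (j : ℕ) := by
        push_cast; ring
    _ = 0 := by rw [h8, zero_mul]

lemma four_mod8 (k : ℕ) (h : 2 ∣ k) : (4 : ZMod 8) * (k : ZMod 8) = 0 := by
  obtain ⟨j, rfl⟩ := h
  have h8 : ((8 : ℕ) : ZMod 8) = 0 := by decide
  calc (4 : ZMod 8) * ((2 * j : ℕ) : ZMod 8) = ((8 : ℕ) : ZMod 8) * (j : ℕ) := by
        push_cast; ring
    _ = 0 := by rw [h8, zero_mul]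

end MockBAux

open MockBAux

/-- Let `p` be an odd prime and `1 ≤ ℓ ≤ p − 1` with `((8ℓ+1)/p) = −1`. Then for all
`n ≥ 0`, `b(4(pn + ℓ)) ≡ 0 (mod 8)`. -/
theorem b_four_pn_ell (p ℓ : ℕ) [Fact p.Prime] (hodd : Odd p)
    (hl1 : 1 ≤ ℓ) (hl2 : ℓ ≤ p - 1)
    (hleg : legendreSym p (8 * (ℓ : ℤ) + 1) = -1) :
    ∀ n : ℕ, b (4 * (p * n + ℓ)) ≡ 0 [ZMOD 8] := by
  intro n'
  set N : ℕ := 4 * (p * n' + ℓ) with hN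
  -- `2N+1` is not an odd square, by the Legendre symbol hypothesis
  have hnosq : ∀ x : ℕ, (2 * x + 1) ^ 2 ≠ 2 * N + 1 := by
    intro x hx
    have hxZ : (2 * (x : ℤ) + 1) ^ 2 = 8 * (ℓ : ℤ) + 1 + 8 * (n' : ℤ) * (p : ℤ) := by
      have h1 : ((2 * x + 1) ^ 2 : ℕ) = 2 * (4 * (p * n' + ℓ)) + 1 := by rw [← hN]; exact hx
      have h2 := congrArg (fun m : ℕ => (m : ℤ)) h1
      push_cast at h2
      linear_combination h2
    have e1 : legendreSym p ((2 * (x : ℤ) + 1) ^ 2) = legendreSym p (8 * (ℓ : ℤ) + 1) := by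
      rw [hxZ, legendreSym.mod p (8 * (ℓ : ℤ) + 1 + 8 * (n' : ℤ) * (p : ℤ)),
        legendreSym.mod p (8 * (ℓ : ℤ) + 1), Int.add_mul_emod_self_right]
    rw [sq, legendreSym.mul, hleg] at e1
    have := mul_self_nonneg (legendreSym p (2 * (x : ℤ) + 1))
    omega
  -- reduce to a coefficient computation in `ZMod 8`
  suffices h : ((b N : ℤ) : ZMod 8) = 0 by
    have hdvd := (ZMod.intCast_zmod_eq_zero_iff_dvd (b N) 8).mp h
    exact Int.modEq_zero_iff_dvd.mpr (by exact_mod_cast hdvd)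
  have hcoeff : ((b N : ℤ) : ZMod 8) = coeff N (toZ8 (GG 1)) := by
    rw [b, mockB_eq, TT_eq_GG, toZ8_coeff]
  rw [hcoeff]
  have hGG : toZ8 (GG 1) = fsum fun n => toZ8 (fG 1 n) := by
    ext t
    rw [toZ8_coeff, GG, coeff_fsum, coeff_fsum]
    push_cast
    exact Finset.sum_congr rfl fun n _ => (toZ8_coeff t (fG 1 n)).symm
  rw [hGG, coeff_fsum]
  apply Finset.sum_eq_zero
  intro n _
  rw [fG_mod8 1 n le_rfl]
  set E : ℕ := 2 * 1 * n + 2 * n ^ 2 with hE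
  rw [map_add, map_add]
  -- term 1 : coefficient of `X^E`
  have ht1 : coeff N ((X : PowerSeries (ZMod 8)) ^ E) = 0 := by
    rw [PowerSeries.coeff_X_pow]
    have hne : N ≠ E := by
      intro hNE
      apply hnosq n
      have hsq : (2 * n + 1) ^ 2 = 4 * n ^ 2 + 4 * n + 1 := by ring
      have hEval : E = 2 * 1 * n + 2 * n ^ 2 := hE
      omega
    simp [hne]
  -- term 2 : the even part of `(1+X^{2c}) geom^2`
  have ht2 : coeff N (2 * ((X : PowerSeries (ZMod 8)) ^ E * sZ (1 + 2 * n))) = 0 := by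
    have hsplit : (2 : PowerSeries (ZMod 8)) * ((X : PowerSeries (ZMod 8)) ^ E * sZ (1 + 2 * n))
        = X ^ E * sZ (1 + 2 * n) + X ^ E * sZ (1 + 2 * n) := by ring
    rw [hsplit, map_add, coeff_X_pow_mul'']
    split_ifs with hEN
    · simp only [sZ, coeff_mk]
      split_ifs with hdvd
      · obtain ⟨⟨k, hk⟩, ht1'⟩ := hdvd
        have h8t : 8 ∣ 2 * (N - E) := by
          obtain ⟨y, hy⟩ := odd_sq n
          have hsq : (2 * n + 1) ^ 2 = 4 * n ^ 2 + 4 * n + 1 := by ring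
          have hEval : E = 2 * 1 * n + 2 * n ^ 2 := hE
          omega
        have h4k : 4 ∣ k := by
          have hcop : Nat.Coprime 4 (1 + 2 * n) := by
            have hodd2 : Nat.Coprime 2 (1 + 2 * n) :=
              Nat.coprime_two_left.mpr ⟨n, by omega⟩
            rw [show (4 : ℕ) = 2 ^ 2 by norm_num]
            exact Nat.Coprime.pow_left 2 hodd2
          refine hcop.dvd_of_dvd_mul_left ?_
          have h4NE : 4 ∣ N - E := by omega
          rw [← hk]
          exact h4NE
        have hkval : (N - E) / (1 + 2 * n) = k := by
          rw [hk, Nat.mul_div_cancel_left _ (by omega : 0 < 1 + 2 * n)]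
        rw [hkval, ← two_mul]
        exact two_mod8 k h4k
      · simp
    · simp
  -- term 3 : the odd-divisor correction terms
  have ht3 : coeff N
      (4 * ((X : PowerSeries (ZMod 8)) ^ E * ∑ j ∈ range n, yZ (1 + 2 * j))) = 0 := by
    have hsplit : (4 : PowerSeries (ZMod 8))
        * ((X : PowerSeries (ZMod 8)) ^ E * ∑ j ∈ range n, yZ (1 + 2 * j))
        = (X ^ E * ∑ j ∈ range n, yZ (1 + 2 * j)) + (X ^ E * ∑ j ∈ range n, yZ (1 + 2 * j))
          + ((X ^ E * ∑ j ∈ range n, yZ (1 + 2 * j))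
            + (X ^ E * ∑ j ∈ range n, yZ (1 + 2 * j))) := by ring
    rw [hsplit, map_add, map_add, coeff_X_pow_mul'']
    split_ifs with hEN
    · have h8t : 8 ∣ 2 * (N - E) := by
        obtain ⟨y, hy⟩ := odd_sq n
        have hsq : (2 * n + 1) ^ 2 = 4 * n ^ 2 + 4 * n + 1 := by ring
        have hEval : E = 2 * 1 * n + 2 * n ^ 2 := hE
        omega
      have hteven : 2 ∣ (N - E) := by omega
      have hsum : coeff (N - E) (∑ j ∈ range n, yZ (1 + 2 * j))
          = ∑ j ∈ range n, coeff (N - E) (yZ (1 + 2 * j)) := map_sum _ _ _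
      have hz : ∀ j ∈ range n,
          (4 : ZMod 8) * coeff (N - E) (yZ (1 + 2 * j)) = 0 := by
        intro j _
        rw [coeff_yZ (1 + 2 * j) (N - E) (by omega)]
        split_ifs with hd
        · obtain ⟨⟨k, hk⟩, -⟩ := hd
          have hkeven : 2 ∣ k := by
            rcases Nat.even_or_odd k with he | ho
            · exact he.two_dvd
            · exfalso
              have hoddmul : Odd ((1 + 2 * j) * k) := Odd.mul ⟨j, by omega⟩ ho
              rw [← hk] at hoddmul
              obtain ⟨a2, ha2⟩ := hoddmul
              omega
          have hkval : (N - E) / (1 + 2 * j) = k := by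
            rw [hk, Nat.mul_div_cancel_left _ (by omega : 0 < 1 + 2 * j)]
          rw [hkval]
          exact four_mod8 k hkeven
        · simp
      have h4 : (4 : ZMod 8) * coeff (N - E) (∑ j ∈ range n, yZ (1 + 2 * j)) = 0 := by
        rw [hsum, Finset.mul_sum]
        exact Finset.sum_eq_zero hz
      linear_combination h4
    · simp
  rw [ht1, ht2, ht3]
  simp
end
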